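/- arXiv:gr-qc/9511036 — 2 statements merged into one kernel-verified Lean document; each statement's English description precedes it below -/
import Mathlib

section
/- Let m ≥ 0 and N = (m+1)(m+2). Fix the ordered monomial bases of V_{m+1,m} and V_{m,m+1}, and let M(p) denote the N×N matrix of P_p in these bases; its entries are linear polynomials in the four entries of p. Then there exists a nonzero constant c ∈ ℂ (depending only on m and the chosen bases) such that, as a polynomial identity in the entries of p, det M(p) = c · (p₀₀p₁₁ − p₀₁p₁₀)^{N/2}. (Paper: Lemma 3.2, with p_a p^a = 2 det p.) -/
/-!
Lemma 3.2: with `N = (m+1)(m+2)`, the determinant of the matrix of the symbol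
map `P_p` in the monomial bases of `V_{m+1,m}` and `V_{m,m+1}` equals
`c · (p₀₀p₁₁ − p₀₁p₁₀)^{N/2}` for some nonzero constant `c`, as a polynomial
identity in the entries of `p`.  We work with generic entries, i.e. over the
polynomial ring `R = ℂ[p₀₀, p₀₁, p₁₀, p₁₁]`.
-/

open MvPolynomial

/-- The coefficient ring `R = ℂ[p₀₀, p₀₁, p₁₀, p₁₁]` of generic entries of `p`. -/
abbrev R : Type := MvPolynomial (Fin 2 × Fin 2) ℂ

/-- The generic matrix `p`, whose entries are the variables of `R`. -/
noncomputable def pGen : Matrix (Fin 2) (Fin 2) R := fun A A' => X (A, A')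

/-- `det p = p₀₀p₁₁ − p₀₁p₁₀` as an element of `R`. -/
noncomputable def Dpoly : R := X ((0 : Fin 2), (0 : Fin 2)) * X (1, 1) - X (0, 1) * X (1, 0)

/-- The symbol map `P_p(L) = Σ_{A,A'} p_{AA'} · τ_{A'} · ∂L/∂π_A` with generic
entries, acting on polynomials in `π₀, π₁` (left variables) and `τ₀, τ₁`
(right variables) with coefficients in `R`. -/
noncomputable def Pmap (L : MvPolynomial (Fin 2 ⊕ Fin 2) R) :
    MvPolynomial (Fin 2 ⊕ Fin 2) R :=
  ∑ A : Fin 2, ∑ A' : Fin 2,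
    C (pGen A A') * (X (Sum.inr A') * pderiv (Sum.inl A) L)

/-- The exponent function of the monomial `π₀^{a₀} π₁^{a₁} τ₀^{b₀} τ₁^{b₁}`. -/
noncomputable def expo (a0 a1 b0 b1 : ℕ) : (Fin 2 ⊕ Fin 2) →₀ ℕ :=
  Finsupp.equivFunOnFinite.symm (Sum.elim ![a0, a1] ![b0, b1])

/-- The `N×N` matrix (`N = (m+1)(m+2)`) of `P_p` in the ordered monomial bases:
the column indexed by `(j, j')` corresponds to the basis monomial
`π₀^{j} π₁^{m+1-j} τ₀^{j'} τ₁^{m-j'}` of `V_{m+1,m}`, and the row indexed by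
`(i, i')` to the basis monomial `π₀^{i'} π₁^{m-i'} τ₀^{i} τ₁^{m+1-i}` of
`V_{m,m+1}`.  Its entries are linear polynomials in the entries of `p`. -/
noncomputable def matP (m : ℕ) :
    Matrix (Fin (m + 2) × Fin (m + 1)) (Fin (m + 2) × Fin (m + 1)) R :=
  fun r c =>
    coeff (expo (r.2 : ℕ) (m - (r.2 : ℕ)) (r.1 : ℕ) (m + 1 - (r.1 : ℕ)))
      (Pmap (monomial (expo (c.1 : ℕ) (m + 1 - (c.1 : ℕ)) (c.2 : ℕ) (m - (c.2 : ℕ))) 1))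

namespace L32

abbrev Vars : Type := Fin 2 ⊕ Fin 2

@[simp] lemma expo_inl0 (a0 a1 b0 b1 : ℕ) : expo a0 a1 b0 b1 (Sum.inl 0) = a0 := rfl
@[simp] lemma expo_inl1 (a0 a1 b0 b1 : ℕ) : expo a0 a1 b0 b1 (Sum.inl 1) = a1 := rfl
@[simp] lemma expo_inr0 (a0 a1 b0 b1 : ℕ) : expo a0 a1 b0 b1 (Sum.inr 0) = b0 := rfl
@[simp] lemma expo_inr1 (a0 a1 b0 b1 : ℕ) : expo a0 a1 b0 b1 (Sum.inr 1) = b1 := rfl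

/-- The explicit entry pattern, over any semiring-with-the-values. -/
noncomputable def matC (m : ℕ) (p : Matrix (Fin 2) (Fin 2) ℂ) :
    Matrix (Fin (m + 2) × Fin (m + 1)) (Fin (m + 2) × Fin (m + 1)) ℂ :=
  fun r c =>
    (if (r.2 : ℕ) + 1 = (c.1 : ℕ) ∧ (r.1 : ℕ) = (c.2 : ℕ) + 1 then ((c.1 : ℕ) : ℂ) * p 0 0 else 0)
  + (if (r.2 : ℕ) + 1 = (c.1 : ℕ) ∧ (r.1 : ℕ) = (c.2 : ℕ) then ((c.1 : ℕ) : ℂ) * p 0 1 else 0)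
  + (if (r.2 : ℕ) = (c.1 : ℕ) ∧ (r.1 : ℕ) = (c.2 : ℕ) + 1 then ((m + 1 - (c.1 : ℕ) : ℕ) : ℂ) * p 1 0 else 0)
  + (if (r.2 : ℕ) = (c.1 : ℕ) ∧ (r.1 : ℕ) = (c.2 : ℕ) then ((m + 1 - (c.1 : ℕ) : ℕ) : ℂ) * p 1 1 else 0)

lemma matP_entry (m : ℕ) (r c : Fin (m + 2) × Fin (m + 1)) :
    matP m r c =
    (if (r.2 : ℕ) + 1 = (c.1 : ℕ) ∧ (r.1 : ℕ) = (c.2 : ℕ) + 1 then ((c.1 : ℕ) : R) * X (0, 0) else 0)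
  + (if (r.2 : ℕ) + 1 = (c.1 : ℕ) ∧ (r.1 : ℕ) = (c.2 : ℕ) then ((c.1 : ℕ) : R) * X (0, 1) else 0)
  + (if (r.2 : ℕ) = (c.1 : ℕ) ∧ (r.1 : ℕ) = (c.2 : ℕ) + 1 then ((m + 1 - (c.1 : ℕ) : ℕ) : R) * X (1, 0) else 0)
  + (if (r.2 : ℕ) = (c.1 : ℕ) ∧ (r.1 : ℕ) = (c.2 : ℕ) then ((m + 1 - (c.1 : ℕ) : ℕ) : R) * X (1, 1) else 0) := by
  obtain ⟨r1, r2⟩ := r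
  obtain ⟨j, j'⟩ := c
  have hr1 : (r1 : ℕ) ≤ m + 1 := Fin.is_le r1
  have hr2 : (r2 : ℕ) ≤ m := Fin.is_le r2
  have hj : (j : ℕ) ≤ m + 1 := Fin.is_le j
  have hj' : (j' : ℕ) ≤ m := Fin.is_le j'
  have key : ∀ (A A' : Fin 2),
      (Finsupp.single (Sum.inr A' : Vars) 1 +
        (expo (j : ℕ) (m + 1 - (j : ℕ)) (j' : ℕ) (m - (j' : ℕ)) - Finsupp.single (Sum.inl A) 1)
        = expo (r2 : ℕ) (m - (r2 : ℕ)) (r1 : ℕ) (m + 1 - (r1 : ℕ)))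
      ↔ ((if A = 0 then ((r2 : ℕ) + 1 = (j : ℕ)) else ((r2 : ℕ) = (j : ℕ))) ∧
         (if A' = 0 then ((r1 : ℕ) = (j' : ℕ) + 1) else ((r1 : ℕ) = (j' : ℕ)))) := by
    intro A A'
    rw [Finsupp.ext_iff]
    simp only [Finsupp.add_apply, Finsupp.tsub_apply, Finsupp.single_apply, Sum.forall,
      Fin.forall_fin_two]
    fin_cases A <;> fin_cases A' <;>
      simp [expo_inl0, expo_inl1, expo_inr0, expo_inr1] <;> omega
  simp only [matP, Pmap, Fin.sum_univ_two, coeff_add, coeff_C_mul, X, monomial_mul, one_mul,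
    pderiv_monomial, coeff_monomial, mul_ite, mul_zero, mul_one]
  simp only [key]
  norm_num [pGen, mul_comm, X]
  ring

end L32

namespace L32

lemma matP_map (m : ℕ) (x : (Fin 2 × Fin 2) → ℂ) :
    (matP m).map (eval x) = matC m (fun A A' => x (A, A')) := by
  ext r c
  simp only [Matrix.map_apply, matP_entry, matC, map_add, apply_ite (eval x), map_mul,
    map_natCast, eval_X, map_zero]

noncomputable def mono (a b : ℕ) (z : Fin (a + 1) × Fin (b + 1)) : MvPolynomial Vars ℂ :=
  monomial (expo (z.1 : ℕ) (a - (z.1 : ℕ)) (z.2 : ℕ) (b - (z.2 : ℕ))) 1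

noncomputable def PC (p : Matrix (Fin 2) (Fin 2) ℂ) (L : MvPolynomial Vars ℂ) :
    MvPolynomial Vars ℂ :=
  ∑ A : Fin 2, ∑ A' : Fin 2, C (p A A') * (X (Sum.inr A') * pderiv (Sum.inl A) L)

lemma sum_ite_point {ι M : Type*} [Fintype ι] {P : ι → Prop} [DecidablePred P]
    [AddCommMonoid M] [Module ℂ M] (z₀ : ι) (h : ∀ z, P z ↔ z = z₀) (v : ℂ) (g : ι → M) :
    ∑ z, (if P z then v else 0) • g z = v • g z₀ := by
  rw [Finset.sum_eq_single z₀]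
  · rw [if_pos ((h z₀).mpr rfl)]
  · intro b _ hb; rw [if_neg (fun hP => hb ((h b).mp hP)), zero_smul]
  · intro hz; exact absurd (Finset.mem_univ z₀) hz

lemma sum_ite_none {ι M : Type*} [Fintype ι] {P : ι → Prop} [DecidablePred P]
    [AddCommMonoid M] [Module ℂ M] (h : ∀ z, ¬ P z) (v : ℂ) (g : ι → M) :
    ∑ z, (if P z then v else 0) • g z = 0 :=
  Finset.sum_eq_zero fun z _ => by rw [if_neg (h z), zero_smul]

lemma PC_mono (m : ℕ) (p : Matrix (Fin 2) (Fin 2) ℂ) (c : Fin (m + 2) × Fin (m + 1)) :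
    PC p (mono (m + 1) m c) = ∑ r : Fin (m + 2) × Fin (m + 1), matC m p r c • mono m (m + 1) (r.2, r.1) := by
  obtain ⟨j, j'⟩ := c
  have hj : (j : ℕ) ≤ m + 1 := Fin.is_le j
  have hj' : (j' : ℕ) ≤ m := Fin.is_le j'
  -- split the RHS into four sums
  have hsplit : ∀ r : Fin (m + 2) × Fin (m + 1), matC m p r (j, j') • mono m (m + 1) (r.2, r.1)
      = (if (r.2 : ℕ) + 1 = (j : ℕ) ∧ (r.1 : ℕ) = (j' : ℕ) + 1 then ((j : ℕ) : ℂ) * p 0 0 else 0) • mono m (m + 1) (r.2, r.1)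
      + (if (r.2 : ℕ) + 1 = (j : ℕ) ∧ (r.1 : ℕ) = (j' : ℕ) then ((j : ℕ) : ℂ) * p 0 1 else 0) • mono m (m + 1) (r.2, r.1)
      + (if (r.2 : ℕ) = (j : ℕ) ∧ (r.1 : ℕ) = (j' : ℕ) + 1 then ((m + 1 - (j : ℕ) : ℕ) : ℂ) * p 1 0 else 0) • mono m (m + 1) (r.2, r.1)
      + (if (r.2 : ℕ) = (j : ℕ) ∧ (r.1 : ℕ) = (j' : ℕ) then ((m + 1 - (j : ℕ) : ℕ) : ℂ) * p 1 1 else 0) • mono m (m + 1) (r.2, r.1) := by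
    intro r; simp only [matC, add_smul]
  rw [Finset.sum_congr rfl (fun r _ => hsplit r)]
  simp only [Finset.sum_add_distrib]
  -- LHS
  simp only [PC, mono, Fin.sum_univ_two, pderiv_monomial, one_mul, expo_inl0, expo_inl1]
  have e1 : ∑ x : Fin (m + 2) × Fin (m + 1),
      (if (x.2 : ℕ) + 1 = (j : ℕ) ∧ (x.1 : ℕ) = (j' : ℕ) + 1 then ((j : ℕ) : ℂ) * p 0 0 else 0) •
        (monomial (expo (x.2 : ℕ) (m - (x.2 : ℕ)) (x.1 : ℕ) (m + 1 - (x.1 : ℕ)))) (1 : ℂ)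
      = C (p 0 0) * (X (Sum.inr 0) *
          (monomial (expo (j : ℕ) (m + 1 - (j : ℕ)) (j' : ℕ) (m - (j' : ℕ)) - Finsupp.single (Sum.inl 0) 1)) (((j : ℕ) : ℂ))) := by
    by_cases h0 : (j : ℕ) = 0
    · rw [sum_ite_none (fun z => by rintro ⟨h1, -⟩; omega)]
      simp [h0]
    · rw [sum_ite_point ((⟨(j' : ℕ) + 1, by omega⟩ : Fin (m + 2)), (⟨(j : ℕ) - 1, by omega⟩ : Fin (m + 1)))
        (fun z => by
          constructor
          · rintro ⟨h1, h2⟩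
            refine Prod.ext (Fin.ext ?_) (Fin.ext ?_) <;> simp <;> omega
          · rintro rfl; constructor <;> simp <;> omega)]
      rw [X, monomial_mul, C_mul_monomial, smul_monomial]
      congr 1
      · congr 1
        rw [Finsupp.ext_iff]
        simp [Sum.forall, Fin.forall_fin_two, Finsupp.add_apply, Finsupp.tsub_apply,
          Finsupp.single_apply]
        omega
      · simp [smul_eq_mul]
        try ring
  have e2 : ∑ x : Fin (m + 2) × Fin (m + 1),
      (if (x.2 : ℕ) + 1 = (j : ℕ) ∧ (x.1 : ℕ) = (j' : ℕ) then ((j : ℕ) : ℂ) * p 0 1 else 0) •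
        (monomial (expo (x.2 : ℕ) (m - (x.2 : ℕ)) (x.1 : ℕ) (m + 1 - (x.1 : ℕ)))) (1 : ℂ)
      = C (p 0 1) * (X (Sum.inr 1) *
          (monomial (expo (j : ℕ) (m + 1 - (j : ℕ)) (j' : ℕ) (m - (j' : ℕ)) - Finsupp.single (Sum.inl 0) 1)) (((j : ℕ) : ℂ))) := by
    by_cases h0 : (j : ℕ) = 0
    · rw [sum_ite_none (fun z => by rintro ⟨h1, -⟩; omega)]
      simp [h0]
    · rw [sum_ite_point ((⟨(j' : ℕ), by omega⟩ : Fin (m + 2)), (⟨(j : ℕ) - 1, by omega⟩ : Fin (m + 1)))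
        (fun z => by
          constructor
          · rintro ⟨h1, h2⟩
            refine Prod.ext (Fin.ext ?_) (Fin.ext ?_) <;> simp <;> omega
          · rintro rfl; constructor <;> simp <;> omega)]
      rw [X, monomial_mul, C_mul_monomial, smul_monomial]
      congr 1
      · congr 1
        rw [Finsupp.ext_iff]
        simp [Sum.forall, Fin.forall_fin_two, Finsupp.add_apply, Finsupp.tsub_apply,
          Finsupp.single_apply]
        omega
      · simp [smul_eq_mul]
        try ring
  have e3 : ∑ x : Fin (m + 2) × Fin (m + 1),
      (if (x.2 : ℕ) = (j : ℕ) ∧ (x.1 : ℕ) = (j' : ℕ) + 1 then ((m + 1 - (j : ℕ) : ℕ) : ℂ) * p 1 0 else 0) •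
        (monomial (expo (x.2 : ℕ) (m - (x.2 : ℕ)) (x.1 : ℕ) (m + 1 - (x.1 : ℕ)))) (1 : ℂ)
      = C (p 1 0) * (X (Sum.inr 0) *
          (monomial (expo (j : ℕ) (m + 1 - (j : ℕ)) (j' : ℕ) (m - (j' : ℕ)) - Finsupp.single (Sum.inl 1) 1)) (((m + 1 - (j : ℕ) : ℕ) : ℂ))) := by
    by_cases h0 : (j : ℕ) = m + 1
    · rw [sum_ite_none (fun z => by rintro ⟨h1, -⟩; have := Fin.is_le z.2; omega)]
      have : ((m + 1 - (j : ℕ) : ℕ) : ℂ) = 0 := by rw [h0]; simp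
      simp [this]
    · rw [sum_ite_point ((⟨(j' : ℕ) + 1, by omega⟩ : Fin (m + 2)), (⟨(j : ℕ), by omega⟩ : Fin (m + 1)))
        (fun z => by
          constructor
          · rintro ⟨h1, h2⟩
            refine Prod.ext (Fin.ext ?_) (Fin.ext ?_) <;> simp <;> omega
          · rintro rfl; constructor <;> simp <;> omega)]
      rw [X, monomial_mul, C_mul_monomial, smul_monomial]
      congr 1
      · congr 1
        rw [Finsupp.ext_iff]
        simp [Sum.forall, Fin.forall_fin_two, Finsupp.add_apply, Finsupp.tsub_apply,
          Finsupp.single_apply]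
        omega
      · simp [smul_eq_mul]
        try ring
  have e4 : ∑ x : Fin (m + 2) × Fin (m + 1),
      (if (x.2 : ℕ) = (j : ℕ) ∧ (x.1 : ℕ) = (j' : ℕ) then ((m + 1 - (j : ℕ) : ℕ) : ℂ) * p 1 1 else 0) •
        (monomial (expo (x.2 : ℕ) (m - (x.2 : ℕ)) (x.1 : ℕ) (m + 1 - (x.1 : ℕ)))) (1 : ℂ)
      = C (p 1 1) * (X (Sum.inr 1) *
          (monomial (expo (j : ℕ) (m + 1 - (j : ℕ)) (j' : ℕ) (m - (j' : ℕ)) - Finsupp.single (Sum.inl 1) 1)) (((m + 1 - (j : ℕ) : ℕ) : ℂ))) := by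
    by_cases h0 : (j : ℕ) = m + 1
    · rw [sum_ite_none (fun z => by rintro ⟨h1, -⟩; have := Fin.is_le z.2; omega)]
      have : ((m + 1 - (j : ℕ) : ℕ) : ℂ) = 0 := by rw [h0]; simp
      simp [this]
    · rw [sum_ite_point ((⟨(j' : ℕ), by omega⟩ : Fin (m + 2)), (⟨(j : ℕ), by omega⟩ : Fin (m + 1)))
        (fun z => by
          constructor
          · rintro ⟨h1, h2⟩
            refine Prod.ext (Fin.ext ?_) (Fin.ext ?_) <;> simp <;> omega
          · rintro rfl; constructor <;> simp <;> omega)]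
      rw [X, monomial_mul, C_mul_monomial, smul_monomial]
      congr 1
      · congr 1
        rw [Finsupp.ext_iff]
        simp [Sum.forall, Fin.forall_fin_two, Finsupp.add_apply, Finsupp.tsub_apply,
          Finsupp.single_apply]
        omega
      · simp [smul_eq_mul]
        try ring
  rw [e1, e2, e3, e4]
  ring

end L32

namespace L32

noncomputable def Tlift (a b : ℕ) (y : Fin (a + 1) × Fin (b + 1) → ℂ) : MvPolynomial Vars ℂ :=
  ∑ z, y z • mono a b z

lemma Tlift_coeff (a b : ℕ) (y : Fin (a + 1) × Fin (b + 1) → ℂ) (z0 : Fin (a + 1) × Fin (b + 1)) :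
    coeff (expo (z0.1 : ℕ) (a - (z0.1 : ℕ)) (z0.2 : ℕ) (b - (z0.2 : ℕ))) (Tlift a b y) = y z0 := by
  rw [Tlift]
  rw [MvPolynomial.coeff_sum]
  simp_rw [coeff_smul, mono, coeff_monomial, smul_eq_mul, mul_ite, mul_one, mul_zero]
  rw [Finset.sum_eq_single z0]
  · rw [if_pos rfl]
  · intro z _ hz
    rw [if_neg]
    intro hE
    have h1 := DFunLike.congr_fun hE (Sum.inl (0 : Fin 2))
    have h2 := DFunLike.congr_fun hE (Sum.inr (0 : Fin 2))
    simp only [expo_inl0, expo_inr0] at h1 h2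
    exact hz (Prod.ext (Fin.ext h1) (Fin.ext h2))
  · intro h; exact absurd (Finset.mem_univ z0) h

lemma Tlift_inj (a b : ℕ) {y y' : Fin (a + 1) × Fin (b + 1) → ℂ}
    (h : Tlift a b y = Tlift a b y') : y = y' := by
  funext z
  rw [← Tlift_coeff a b y z, ← Tlift_coeff a b y' z, h]

noncomputable def PCL (p : Matrix (Fin 2) (Fin 2) ℂ) :
    MvPolynomial Vars ℂ →ₗ[ℂ] MvPolynomial Vars ℂ :=
  ∑ A : Fin 2, ∑ A' : Fin 2,
    (LinearMap.mulLeft ℂ (C (p A A') * X (Sum.inr A'))) ∘ₗ (pderiv (Sum.inl A)).toLinearMap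

lemma PCL_apply (p : Matrix (Fin 2) (Fin 2) ℂ) (L : MvPolynomial Vars ℂ) :
    PCL p L = PC p L := by
  simp [PCL, PC, LinearMap.sum_apply, mul_assoc]

lemma PC_smul (p : Matrix (Fin 2) (Fin 2) ℂ) (c : ℂ) (L : MvPolynomial Vars ℂ) :
    PC p (c • L) = c • PC p L := by
  rw [← PCL_apply, ← PCL_apply, map_smul]

lemma PC_sum (p : Matrix (Fin 2) (Fin 2) ℂ) {ι : Type*} (S : Finset ι)
    (f : ι → MvPolynomial Vars ℂ) : PC p (∑ i ∈ S, f i) = ∑ i ∈ S, PC p (f i) := by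
  simp_rw [← PCL_apply]; exact map_sum _ _ _

/-- "Output-side" lift. -/
noncomputable def Tout (m : ℕ) (y : Fin (m + 2) × Fin (m + 1) → ℂ) : MvPolynomial Vars ℂ :=
  ∑ r, y r • mono m (m + 1) (r.2, r.1)

lemma Tout_eq (m : ℕ) (y : Fin (m + 2) × Fin (m + 1) → ℂ) :
    Tout m y = Tlift m (m + 1) (fun z => y (z.2, z.1)) := by
  rw [Tout, Tlift]
  exact Fintype.sum_equiv (Equiv.prodComm _ _) _ _ (fun z => rfl)

lemma Tout_inj (m : ℕ) {y y' : Fin (m + 2) × Fin (m + 1) → ℂ}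
    (h : Tout m y = Tout m y') : y = y' := by
  rw [Tout_eq, Tout_eq] at h
  have := Tlift_inj _ _ h
  funext r
  exact congrFun this (r.2, r.1)

lemma matC_bridge (m : ℕ) (p : Matrix (Fin 2) (Fin 2) ℂ) (y : Fin (m + 2) × Fin (m + 1) → ℂ) :
    Tout m ((matC m p).mulVec y) = PC p (Tlift (m + 1) m y) := by
  rw [Tlift, PC_sum]
  simp_rw [PC_smul, PC_mono, Tout, Matrix.mulVec, dotProduct, Finset.sum_smul,
    Finset.smul_sum, smul_smul]
  rw [Finset.sum_comm]
  refine Finset.sum_congr rfl fun c _ => Finset.sum_congr rfl fun r _ => ?_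
  ring_nf

end L32

namespace L32

lemma expo_eq_sum_single (a0 a1 b0 b1 : ℕ) :
    expo a0 a1 b0 b1 = Finsupp.single (Sum.inl 0 : Vars) a0 + Finsupp.single (Sum.inl 1) a1
      + Finsupp.single (Sum.inr 0) b0 + Finsupp.single (Sum.inr 1) b1 := by
  rw [Finsupp.ext_iff]
  simp [Sum.forall, Fin.forall_fin_two, Finsupp.add_apply, Finsupp.single_apply]

lemma mono_eq (a b : ℕ) (z : Fin (a + 1) × Fin (b + 1)) :
    mono a b z = X (Sum.inl 0) ^ (z.1 : ℕ) * X (Sum.inl 1) ^ (a - (z.1 : ℕ))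
      * X (Sum.inr 0) ^ (z.2 : ℕ) * X (Sum.inr 1) ^ (b - (z.2 : ℕ)) := by
  rw [mono, expo_eq_sum_single]
  simp [X_pow_eq_monomial, monomial_mul]

lemma prodX (e0 e1 e2 e3 : ℕ) :
    X (Sum.inl 0) ^ e0 * X (Sum.inl 1) ^ e1 * X (Sum.inr 0) ^ e2 * X (Sum.inr 1) ^ e3
      = (monomial (expo e0 e1 e2 e3)) (1 : ℂ) := by
  rw [expo_eq_sum_single]
  simp [X_pow_eq_monomial, monomial_mul]

noncomputable def Sπ (s t α : ℂ) : MvPolynomial Vars ℂ →ₐ[ℂ] MvPolynomial Vars ℂ :=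
  aeval (Sum.elim ![C s * X (Sum.inl 0), C α * X (Sum.inl 0) + C t * X (Sum.inl 1)]
    (fun A' => X (Sum.inr A')))

noncomputable def Tτ (β : ℂ) : MvPolynomial Vars ℂ →ₐ[ℂ] MvPolynomial Vars ℂ :=
  aeval (Sum.elim (fun A => X (Sum.inl A))
    ![X (Sum.inr 0) + C β * X (Sum.inr 1), X (Sum.inr 1)])

@[simp] lemma Sπ_X0 (s t α : ℂ) : Sπ s t α (X (Sum.inl 0)) = C s * X (Sum.inl 0) := by
  simp [Sπ]
@[simp] lemma Sπ_X1 (s t α : ℂ) :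
    Sπ s t α (X (Sum.inl 1)) = C α * X (Sum.inl 0) + C t * X (Sum.inl 1) := by
  simp [Sπ]
@[simp] lemma Sπ_Xr (s t α : ℂ) (A' : Fin 2) : Sπ s t α (X (Sum.inr A')) = X (Sum.inr A') := by
  simp [Sπ]
@[simp] lemma Tτ_X0 (β : ℂ) : Tτ β (X (Sum.inr 0)) = X (Sum.inr 0) + C β * X (Sum.inr 1) := by
  simp [Tτ]
@[simp] lemma Tτ_X1 (β : ℂ) : Tτ β (X (Sum.inr 1)) = X (Sum.inr 1) := by
  simp [Tτ]
@[simp] lemma Tτ_Xl (β : ℂ) (A : Fin 2) : Tτ β (X (Sum.inl A)) = X (Sum.inl A) := by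
  simp [Tτ]

noncomputable def SLM (a b : ℕ) (s t α : ℂ) :
    Matrix (Fin (a + 1) × Fin (b + 1)) (Fin (a + 1) × Fin (b + 1)) ℂ :=
  fun r c => if r.2 = c.2 ∧ (c.1 : ℕ) ≤ (r.1 : ℕ) then
    ((a - (c.1 : ℕ)).choose ((r.1 : ℕ) - (c.1 : ℕ)) : ℂ) * α ^ ((r.1 : ℕ) - (c.1 : ℕ))
      * t ^ (a - (r.1 : ℕ)) * s ^ (c.1 : ℕ) else 0

noncomputable def TUM (a b : ℕ) (β : ℂ) :
    Matrix (Fin (a + 1) × Fin (b + 1)) (Fin (a + 1) × Fin (b + 1)) ℂ :=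
  fun r c => if r.1 = c.1 ∧ (r.2 : ℕ) ≤ (c.2 : ℕ) then
    ((c.2 : ℕ).choose (r.2 : ℕ) : ℂ) * β ^ ((c.2 : ℕ) - (r.2 : ℕ)) else 0

lemma Sπ_mono (a b : ℕ) (s t α : ℂ) (z : Fin (a + 1) × Fin (b + 1)) :
    Sπ s t α (mono a b z) = ∑ r, SLM a b s t α r z • mono a b r := by
  obtain ⟨z1, z2⟩ := z
  have hz1 : (z1 : ℕ) ≤ a := Fin.is_le z1
  have hz2 : (z2 : ℕ) ≤ b := Fin.is_le z2
  rw [Fintype.sum_prod_type]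
  simp only [SLM, mono, ite_and]
  rw [Finset.sum_comm]
  simp only [ite_smul, zero_smul]
  simp_rw [Finset.sum_ite_irrel, Finset.sum_const_zero]
  rw [Finset.sum_ite_eq' Finset.univ z2]
  simp only [Finset.mem_univ, if_true]
  rw [Fin.sum_univ_eq_sum_range (fun n => if (z1 : ℕ) ≤ n then
      (((a - (z1 : ℕ)).choose (n - (z1 : ℕ)) : ℂ) * α ^ (n - (z1 : ℕ)) * t ^ (a - n) * s ^ (z1 : ℕ)) •
        (monomial (expo n (a - n) (z2 : ℕ) (b - (z2 : ℕ)))) (1 : ℂ) else 0) (a + 1)]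
  rw [← Finset.sum_filter]
  have hfil : (Finset.range (a + 1)).filter (fun n => (z1 : ℕ) ≤ n) = Finset.Ico (z1 : ℕ) (a + 1) := by
    ext n
    simp only [Finset.mem_filter, Finset.mem_range, Finset.mem_Ico]
    omega
  rw [hfil, Finset.sum_Ico_eq_sum_range]
  rw [show (monomial (expo ((z1 : ℕ)) (a - (z1 : ℕ)) ((z2 : ℕ)) (b - (z2 : ℕ)))) (1 : ℂ)
      = mono a b (z1, z2) from rfl, mono_eq]
  simp only [map_mul, map_pow, Sπ_X0, Sπ_X1, Sπ_Xr]
  rw [add_pow]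
  simp only [Finset.sum_mul, Finset.mul_sum]
  rw [show a + 1 - (z1 : ℕ) = (a - (z1 : ℕ)) + 1 by omega]
  refine Finset.sum_congr rfl fun k hk => ?_
  have hk' : k ≤ a - (z1 : ℕ) := by
    simp only [Finset.mem_range] at hk
    omega
  have Cpow : ∀ (c : ℂ) (n : ℕ), (C c : MvPolynomial Vars ℂ) ^ n = C (c ^ n) := fun c n =>
    (map_pow C c n).symm
  have hcast : ((((a - (z1 : ℕ)).choose k) : ℕ) : MvPolynomial Vars ℂ)
      = C ((((a - (z1 : ℕ)).choose k) : ℕ) : ℂ) := by simp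
  rw [show a - (z1 : ℕ) - k = a - ((z1 : ℕ) + k) from by omega,
    show (z1 : ℕ) + k - (z1 : ℕ) = k from by omega, smul_eq_C_mul, ← prodX, hcast]
  simp only [map_mul, ← Cpow]
  ring

end L32

namespace L32

lemma Tτ_mono (a b : ℕ) (β : ℂ) (z : Fin (a + 1) × Fin (b + 1)) :
    Tτ β (mono a b z) = ∑ r, TUM a b β r z • mono a b r := by
  obtain ⟨z1, z2⟩ := z
  have hz1 : (z1 : ℕ) ≤ a := Fin.is_le z1
  have hz2 : (z2 : ℕ) ≤ b := Fin.is_le z2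
  rw [Fintype.sum_prod_type]
  simp only [TUM, mono, ite_and]
  simp only [ite_smul, zero_smul]
  simp_rw [Finset.sum_ite_irrel, Finset.sum_const_zero]
  rw [Finset.sum_ite_eq' Finset.univ z1]
  simp only [Finset.mem_univ, if_true]
  rw [Fin.sum_univ_eq_sum_range (fun n => if n ≤ (z2 : ℕ) then
      (((z2 : ℕ).choose n : ℂ) * β ^ ((z2 : ℕ) - n)) •
        (monomial (expo ((z1 : ℕ)) (a - (z1 : ℕ)) n (b - n))) (1 : ℂ) else 0) (b + 1)]
  rw [← Finset.sum_filter]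
  have hfil : (Finset.range (b + 1)).filter (fun n => n ≤ (z2 : ℕ)) = Finset.range ((z2 : ℕ) + 1) := by
    ext n
    simp only [Finset.mem_filter, Finset.mem_range]
    omega
  rw [hfil]
  rw [show (monomial (expo ((z1 : ℕ)) (a - (z1 : ℕ)) ((z2 : ℕ)) (b - (z2 : ℕ)))) (1 : ℂ)
      = mono a b (z1, z2) from rfl, mono_eq]
  simp only [map_mul, map_pow, Tτ_X0, Tτ_X1, Tτ_Xl]
  rw [add_pow]
  simp only [Finset.sum_mul, Finset.mul_sum]
  refine Finset.sum_congr rfl fun k hk => ?_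
  have hk' : k ≤ (z2 : ℕ) := by
    simp only [Finset.mem_range] at hk
    omega
  have Cpow : ∀ (c : ℂ) (n : ℕ), (C c : MvPolynomial Vars ℂ) ^ n = C (c ^ n) := fun c n =>
    (map_pow C c n).symm
  have hcast : ((((z2 : ℕ)).choose k : ℕ) : MvPolynomial Vars ℂ)
      = C ((((z2 : ℕ)).choose k : ℕ) : ℂ) := by simp
  rw [show b - k = ((z2 : ℕ) - k) + (b - (z2 : ℕ)) from by omega, smul_eq_C_mul, ← prodX, hcast]
  simp only [map_mul, ← Cpow, pow_add]
  ring

end L32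

namespace L32

lemma PC_add (p : Matrix (Fin 2) (Fin 2) ℂ) (f g : MvPolynomial Vars ℂ) :
    PC p (f + g) = PC p f + PC p g := by
  rw [← PCL_apply, ← PCL_apply, ← PCL_apply, map_add]

lemma PC_C (p : Matrix (Fin 2) (Fin 2) ℂ) (c : ℂ) : PC p (C c) = 0 := by
  simp [PC]

lemma PC_mul (p : Matrix (Fin 2) (Fin 2) ℂ) (f g : MvPolynomial Vars ℂ) :
    PC p (f * g) = PC p f * g + f * PC p g := by
  have key : ∀ (A A' : Fin 2), C (p A A') * (X (Sum.inr A') *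
        (pderiv (Sum.inl A) f * g + f * pderiv (Sum.inl A) g))
      = C (p A A') * (X (Sum.inr A') * pderiv (Sum.inl A) f) * g
        + f * (C (p A A') * (X (Sum.inr A') * pderiv (Sum.inl A) g)) := fun A A' => by ring
  simp only [PC, pderiv_mul, key, Finset.sum_add_distrib, Finset.sum_mul, Finset.mul_sum]

lemma PC_Xl (q : Matrix (Fin 2) (Fin 2) ℂ) (B : Fin 2) :
    PC q (X (Sum.inl B)) = C (q B 0) * X (Sum.inr 0) + C (q B 1) * X (Sum.inr 1) := by
  fin_cases B <;> simp [PC, Fin.sum_univ_two, pderiv_X, Pi.single_apply]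

lemma PC_Xr (q : Matrix (Fin 2) (Fin 2) ℂ) (A' : Fin 2) : PC q (X (Sum.inr A')) = 0 := by
  simp [PC, pderiv_X]

noncomputable def cmat (s t α : ℂ) : Matrix (Fin 2) (Fin 2) ℂ := ![![s, 0], ![α, t]]
noncomputable def dmat (β : ℂ) : Matrix (Fin 2) (Fin 2) ℂ := ![![1, β], ![0, 1]]

@[simp] lemma Sπ_C (s t α c : ℂ) : Sπ s t α (C c) = C c := by
  simp [Sπ, aeval_C, algebraMap_eq]

@[simp] lemma Tτ_C (β c : ℂ) : Tτ β (C c) = C c := by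
  simp [Tτ, aeval_C, algebraMap_eq]

lemma PC_Sπ (s t α : ℂ) (q : Matrix (Fin 2) (Fin 2) ℂ) (L : MvPolynomial Vars ℂ) :
    PC q (Sπ s t α L) = Sπ s t α (PC (cmat s t α * q) L) := by
  have base : ∀ v : Vars, PC q (Sπ s t α (X v)) = Sπ s t α (PC (cmat s t α * q) (X v)) := by
    rintro (A | A) <;> fin_cases A <;>
      simp [PC_Xl, PC_Xr, PC_mul, PC_add, PC_C, Matrix.mul_apply, Fin.sum_univ_two,
        map_add, map_mul, mul_add, add_mul, map_zero] <;> simp [cmat] <;> ring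
  induction L using MvPolynomial.induction_on with
  | C c => simp [PC_C]
  | add f g hf hg => rw [map_add, PC_add, hf, hg, PC_add, map_add]
  | mul_X f v hf =>
      rw [map_mul, PC_mul, hf, base v, PC_mul (cmat s t α * q) f (X v), map_add,
        map_mul, map_mul]

lemma Tτ_PC (β : ℂ) (q : Matrix (Fin 2) (Fin 2) ℂ) (L : MvPolynomial Vars ℂ) :
    Tτ β (PC q L) = PC (q * dmat β) (Tτ β L) := by
  have base : ∀ v : Vars, Tτ β (PC q (X v)) = PC (q * dmat β) (Tτ β (X v)) := by
    rintro (A | A) <;> fin_cases A <;>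
      simp [PC_Xl, PC_Xr, PC_mul, PC_add, PC_C, Matrix.mul_apply, Fin.sum_univ_two,
        map_add, map_mul, mul_add, add_mul, map_zero] <;> simp [dmat] <;> ring
  induction L using MvPolynomial.induction_on with
  | C c => simp [PC_C]
  | add f g hf hg => rw [PC_add, map_add, hf, hg, map_add, PC_add]
  | mul_X f v hf =>
      rw [PC_mul, map_add, map_mul, map_mul, hf, base v, map_mul,
        PC_mul (q * dmat β) (Tτ β f) (Tτ β (X v))]

lemma SLM_bridge (a b : ℕ) (s t α : ℂ) (w : Fin (a + 1) × Fin (b + 1) → ℂ) :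
    Tlift a b ((SLM a b s t α).mulVec w) = Sπ s t α (Tlift a b w) := by
  conv_rhs => rw [Tlift]
  rw [map_sum]
  simp_rw [map_smul, Sπ_mono, Finset.smul_sum]
  conv_lhs => rw [Tlift]
  simp_rw [Matrix.mulVec, dotProduct, Finset.sum_smul, smul_smul]
  rw [Finset.sum_comm]
  exact Finset.sum_congr rfl fun c _ => Finset.sum_congr rfl fun r _ => by ring_nf

lemma TUM_bridge (a b : ℕ) (β : ℂ) (w : Fin (a + 1) × Fin (b + 1) → ℂ) :
    Tlift a b ((TUM a b β).mulVec w) = Tτ β (Tlift a b w) := by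
  conv_rhs => rw [Tlift]
  rw [map_sum]
  simp_rw [map_smul, Tτ_mono, Finset.smul_sum]
  conv_lhs => rw [Tlift]
  simp_rw [Matrix.mulVec, dotProduct, Finset.sum_smul, smul_smul]
  rw [Finset.sum_comm]
  exact Finset.sum_congr rfl fun c _ => Finset.sum_congr rfl fun r _ => by ring_nf

noncomputable def swapM (m : ℕ)
    (G : Matrix (Fin (m + 1) × Fin (m + 2)) (Fin (m + 1) × Fin (m + 2)) ℂ) :
    Matrix (Fin (m + 2) × Fin (m + 1)) (Fin (m + 2) × Fin (m + 1)) ℂ :=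
  fun r c => G (r.2, r.1) (c.2, c.1)

lemma swapM_mulVec (m : ℕ)
    (G : Matrix (Fin (m + 1) × Fin (m + 2)) (Fin (m + 1) × Fin (m + 2)) ℂ)
    (y : Fin (m + 2) × Fin (m + 1) → ℂ) (z : Fin (m + 1) × Fin (m + 2)) :
    ((swapM m G).mulVec y) (z.2, z.1) = (G.mulVec (fun w => y (w.2, w.1))) z := by
  simp only [Matrix.mulVec, dotProduct, swapM]
  exact Fintype.sum_equiv (Equiv.prodComm _ _).symm _ _ (fun c => rfl)

lemma swapM_bridge_S (m : ℕ) (s t α : ℂ) (y : Fin (m + 2) × Fin (m + 1) → ℂ) :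
    Tout m ((swapM m (SLM m (m + 1) s t α)).mulVec y) = Sπ s t α (Tout m y) := by
  rw [Tout_eq, Tout_eq]
  rw [show (fun z : Fin (m + 1) × Fin (m + 2) => ((swapM m (SLM m (m + 1) s t α)).mulVec y) (z.2, z.1))
      = (SLM m (m + 1) s t α).mulVec (fun w => y (w.2, w.1)) from funext fun z => swapM_mulVec m _ y z]
  exact SLM_bridge m (m + 1) s t α _

lemma swapM_bridge_T (m : ℕ) (β : ℂ) (y : Fin (m + 2) × Fin (m + 1) → ℂ) :
    Tout m ((swapM m (TUM m (m + 1) β)).mulVec y) = Tτ β (Tout m y) := by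
  rw [Tout_eq, Tout_eq]
  rw [show (fun z : Fin (m + 1) × Fin (m + 2) => ((swapM m (TUM m (m + 1) β)).mulVec y) (z.2, z.1))
      = (TUM m (m + 1) β).mulVec (fun w => y (w.2, w.1)) from funext fun z => swapM_mulVec m _ y z]
  exact TUM_bridge m (m + 1) β _

lemma matrix_eq_of_mulVec {n : Type*} [Fintype n] [DecidableEq n] {M N : Matrix n n ℂ}
    (h : ∀ y, M.mulVec y = N.mulVec y) : M = N := by
  ext i j
  have := congrFun (h (Pi.single j 1)) i
  simpa [Matrix.mulVec_single] using this

lemma M1 (m : ℕ) (s t α : ℂ) (q : Matrix (Fin 2) (Fin 2) ℂ) :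
    matC m q * SLM (m + 1) m s t α
      = swapM m (SLM m (m + 1) s t α) * matC m (cmat s t α * q) := by
  apply matrix_eq_of_mulVec
  intro y
  apply Tout_inj (m := m)
  rw [← Matrix.mulVec_mulVec, ← Matrix.mulVec_mulVec]
  rw [matC_bridge, SLM_bridge, PC_Sπ, ← matC_bridge, ← swapM_bridge_S]

lemma M2 (m : ℕ) (β : ℂ) (q : Matrix (Fin 2) (Fin 2) ℂ) :
    swapM m (TUM m (m + 1) β) * matC m q = matC m (q * dmat β) * TUM (m + 1) m β := by
  apply matrix_eq_of_mulVec
  intro y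
  apply Tout_inj (m := m)
  rw [← Matrix.mulVec_mulVec, ← Matrix.mulVec_mulVec]
  rw [swapM_bridge_T, matC_bridge, Tτ_PC, ← TUM_bridge, ← matC_bridge]

end L32

namespace L32

lemma det_swapM (m : ℕ) (G : Matrix (Fin (m + 1) × Fin (m + 2)) (Fin (m + 1) × Fin (m + 2)) ℂ) :
    (swapM m G).det = G.det := by
  have : swapM m G = G.submatrix (Equiv.prodComm (Fin (m + 2)) (Fin (m + 1)))
      (Equiv.prodComm (Fin (m + 2)) (Fin (m + 1))) := rfl
  rw [this, Matrix.det_submatrix_equiv_self]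

lemma det_TUM (a b : ℕ) (β : ℂ) : (TUM a b β).det = 1 := by
  have hbt : (TUM a b β).BlockTriangular (fun x => (x.2 : ℕ)) := by
    intro r c h
    dsimp only at h
    rw [TUM, if_neg]
    rintro ⟨-, h2⟩
    omega
  rw [hbt.det]
  apply Finset.prod_eq_one
  intro v hv
  have hblock : (TUM a b β).toSquareBlock (fun x => (x.2 : ℕ)) v = 1 := by
    ext r c
    obtain ⟨⟨r1, r2⟩, hr⟩ := r
    obtain ⟨⟨c1, c2⟩, hc⟩ := c
    simp only at hr hc
    simp only [Matrix.toSquareBlock_def, TUM, Matrix.one_apply, Matrix.of_apply]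
    by_cases h : r1 = c1
    · subst h
      have h22 : r2 = c2 := by
        apply Fin.ext
        omega
      subst h22
      rw [if_pos ⟨rfl, le_refl _⟩, if_pos (Subtype.ext rfl)]
      simp [Nat.choose_self]
    · rw [if_neg, if_neg]
      · intro hrc
        exact h (congrArg (fun x => x.1.1) hrc)
      · rintro ⟨h1, -⟩
        exact h h1
  rw [hblock, Matrix.det_one]

end L32

namespace L32

lemma det_SLM (a b : ℕ) (s t α : ℂ) :
    (SLM a b s t α).det = (s * t) ^ ((b + 1) * (a * (a + 1) / 2)) := by
  rw [← Matrix.det_transpose]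
  have hbt : (SLM a b s t α).transpose.BlockTriangular (fun x => (x.1 : ℕ)) := by
    intro r c h
    dsimp only at h
    rw [Matrix.transpose_apply, SLM, if_neg]
    rintro ⟨-, h2⟩
    omega
  rw [hbt.det]
  have himg : (Finset.univ : Finset (Fin (a + 1) × Fin (b + 1))).image (fun x => (x.1 : ℕ))
      = Finset.range (a + 1) := by
    ext n
    simp only [Finset.mem_image, Finset.mem_univ, true_and, Finset.mem_range]
    constructor
    · rintro ⟨x, rfl⟩; exact x.1.isLt
    · intro h; exact ⟨(⟨n, h⟩, ⟨0, Nat.succ_pos b⟩), rfl⟩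
  rw [himg]
  have hblock : ∀ v ∈ Finset.range (a + 1),
      ((SLM a b s t α).transpose.toSquareBlock (fun x => (x.1 : ℕ)) v).det
        = (s ^ v * t ^ (a - v)) ^ (b + 1) := by
    intro v hv
    have hv' : v < a + 1 := Finset.mem_range.mp hv
    have hb : (SLM a b s t α).transpose.toSquareBlock (fun x => (x.1 : ℕ)) v
        = (s ^ v * t ^ (a - v)) •
          (1 : Matrix {x : Fin (a + 1) × Fin (b + 1) // (x.1 : ℕ) = v}
            {x : Fin (a + 1) × Fin (b + 1) // (x.1 : ℕ) = v} ℂ) := by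
      ext r c
      obtain ⟨⟨r1, r2⟩, hr⟩ := r
      obtain ⟨⟨c1, c2⟩, hc⟩ := c
      simp only at hr hc
      have h11 : r1 = c1 := by
        apply Fin.ext
        omega
      subst h11
      simp only [Matrix.toSquareBlock_def, Matrix.transpose_apply, SLM, Matrix.smul_apply,
        Matrix.one_apply, smul_eq_mul, Matrix.of_apply]
      by_cases h : c2 = r2
      · subst h
        rw [if_pos ⟨rfl, le_refl _⟩, if_pos (Subtype.ext rfl)]
        simp only [Nat.sub_self, Nat.choose_zero_right, pow_zero, Nat.cast_one, mul_one]
        rw [hr]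
        ring
      · rw [if_neg (show ¬(c2 = r2 ∧ (r1 : ℕ) ≤ (r1 : ℕ)) from by rintro ⟨h1, -⟩; exact h h1),
            if_neg (show ¬_ = _ from by
              intro hrc
              exact h (congrArg (fun x => x.1.2) hrc).symm)]
        ring
    rw [hb, Matrix.det_smul, Matrix.det_one, mul_one]
    have e : {x : Fin (a + 1) × Fin (b + 1) // (x.1 : ℕ) = v} ≃ Fin (b + 1) :=
      { toFun := fun x => x.val.2
        invFun := fun y => ⟨(⟨v, hv'⟩, y), rfl⟩
        left_inv := fun x => Subtype.ext (Prod.ext (Fin.ext x.2.symm) rfl)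
        right_inv := fun y => rfl }
    rw [Fintype.card_congr e, Fintype.card_fin]
  rw [Finset.prod_congr rfl hblock]
  simp_rw [mul_pow, ← pow_mul]
  rw [Finset.prod_mul_distrib, Finset.prod_pow_eq_pow_sum, Finset.prod_pow_eq_pow_sum]
  have h1 : ∑ v ∈ Finset.range (a + 1), v * (b + 1) = (b + 1) * (a * (a + 1) / 2) := by
    rw [← Finset.sum_mul, Finset.sum_range_id, Nat.add_sub_cancel, Nat.mul_comm (a + 1) a,
      Nat.mul_comm]
  have h2 : ∑ v ∈ Finset.range (a + 1), (a - v) * (b + 1) = (b + 1) * (a * (a + 1) / 2) := by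
    rw [← Finset.sum_mul]
    have hrefl : ∑ v ∈ Finset.range (a + 1), (a - v) = ∑ v ∈ Finset.range (a + 1), v := by
      rw [← Finset.sum_range_reflect (fun j => j) (a + 1)]
      refine Finset.sum_congr rfl fun v hv => ?_
      omega
    rw [hrefl, Finset.sum_range_id, Nat.add_sub_cancel, Nat.mul_comm (a + 1) a, Nat.mul_comm]
  rw [h1, h2, ← mul_pow]

end L32

namespace L32

lemma sum_ite_point_mul {ι : Type*} [Fintype ι] {P : ι → Prop} [DecidablePred P]
    (z₀ : ι) (h : ∀ z, P z ↔ z = z₀) (w v : ι → ℂ) :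
    ∑ z, (if P z then w z else 0) * v z = w z₀ * v z₀ := by
  rw [Finset.sum_eq_single z₀]
  · rw [if_pos ((h z₀).mpr rfl)]
  · intro b _ hb; rw [if_neg (fun hP => hb ((h b).mp hP)), zero_mul]
  · intro hz; exact absurd (Finset.mem_univ z₀) hz

lemma sum_ite_none_mul {ι : Type*} [Fintype ι] {P : ι → Prop} [DecidablePred P]
    (h : ∀ z, ¬ P z) (w v : ι → ℂ) :
    ∑ z, (if P z then w z else 0) * v z = 0 :=
  Finset.sum_eq_zero fun z _ => by rw [if_neg (h z), zero_mul]

lemma matC_one_inj (m : ℕ) (v : Fin (m + 2) × Fin (m + 1) → ℂ)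
    (hv : (matC m 1).mulVec v = 0) : v = 0 := by
  have rel : ∀ (iN i'N : ℕ), iN ≤ m + 1 → i'N ≤ m →
      (∑ c : Fin (m + 2) × Fin (m + 1),
        (if i'N + 1 = (c.1 : ℕ) ∧ iN = (c.2 : ℕ) + 1 then ((c.1 : ℕ) : ℂ) else 0) * v c)
      + (∑ c : Fin (m + 2) × Fin (m + 1),
        (if i'N = (c.1 : ℕ) ∧ iN = (c.2 : ℕ) then ((m + 1 - (c.1 : ℕ) : ℕ) : ℂ) else 0) * v c)
      = 0 := by
    intro iN i'N hi hi'
    have h0 := congrFun hv ((⟨iN, by omega⟩ : Fin (m + 2)), (⟨i'N, by omega⟩ : Fin (m + 1)))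
    rw [Matrix.mulVec, Pi.zero_apply, dotProduct] at h0
    calc (∑ c : Fin (m + 2) × Fin (m + 1),
        (if i'N + 1 = (c.1 : ℕ) ∧ iN = (c.2 : ℕ) + 1 then ((c.1 : ℕ) : ℂ) else 0) * v c)
      + (∑ c : Fin (m + 2) × Fin (m + 1),
        (if i'N = (c.1 : ℕ) ∧ iN = (c.2 : ℕ) then ((m + 1 - (c.1 : ℕ) : ℕ) : ℂ) else 0) * v c)
        = ∑ c : Fin (m + 2) × Fin (m + 1),
            matC m 1 ((⟨iN, by omega⟩ : Fin (m + 2)), (⟨i'N, by omega⟩ : Fin (m + 1))) c * v c := by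
          rw [← Finset.sum_add_distrib]
          refine Finset.sum_congr rfl fun c _ => ?_
          rw [← add_mul]
          congr 1
          simp [matC, Matrix.one_apply]
      _ = 0 := h0
  -- Family 1: rows (i, i') = (j', j) with j ≤ m, j' arbitrary
  have relB : ∀ (jN j'N : ℕ) (hjB : jN ≤ m) (hj'B : j'N ≤ m),
      (if 1 ≤ j'N then ((jN + 1 : ℕ) : ℂ)
          * v (⟨jN + 1, by omega⟩, ⟨j'N - 1, by omega⟩) else 0)
        + ((m + 1 - jN : ℕ) : ℂ) * v (⟨jN, by omega⟩, ⟨j'N, by omega⟩) = 0 := by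
    intro jN j'N hj hj'
    have h0 := rel j'N jN (by omega) (by omega)
    rw [show (∑ c : Fin (m + 2) × Fin (m + 1),
        (if jN + 1 = (c.1 : ℕ) ∧ j'N = (c.2 : ℕ) + 1 then ((c.1 : ℕ) : ℂ) else 0) * v c)
      = (if 1 ≤ j'N then ((jN + 1 : ℕ) : ℂ)
          * v (⟨jN + 1, by omega⟩, ⟨j'N - 1, by omega⟩) else 0) from ?_,
      show (∑ c : Fin (m + 2) × Fin (m + 1),
        (if jN = (c.1 : ℕ) ∧ j'N = (c.2 : ℕ) then ((m + 1 - (c.1 : ℕ) : ℕ) : ℂ) else 0) * v c)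
      = ((m + 1 - jN : ℕ) : ℂ) * v (⟨jN, by omega⟩, ⟨j'N, by omega⟩) from ?_] at h0
    · exact h0
    · rw [sum_ite_point_mul ((⟨jN, by omega⟩ : Fin (m + 2)), (⟨j'N, by omega⟩ : Fin (m + 1)))
        (fun z => by
          constructor
          · rintro ⟨h1, h2⟩
            refine Prod.ext (Fin.ext ?_) (Fin.ext ?_) <;> simp <;> omega
          · rintro rfl
            constructor <;> simp <;> omega)]
    · by_cases h1 : 1 ≤ j'N
      · rw [if_pos h1, sum_ite_point_mul ((⟨jN + 1, by omega⟩ : Fin (m + 2)), (⟨j'N - 1, by omega⟩ : Fin (m + 1)))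
          (fun z => by
            constructor
            · rintro ⟨h1, h2⟩
              refine Prod.ext (Fin.ext ?_) (Fin.ext ?_) <;> simp <;> omega
            · rintro rfl
              constructor <;> simp <;> omega)]
      · rw [if_neg h1, sum_ite_none_mul (fun z => by rintro ⟨-, h2⟩; omega)]
  -- Family 2: rows (i, i') = (j' + 1, j - 1) with j ≥ 1
  have relC1 : ∀ (jN : ℕ) (hj1C : 1 ≤ jN) (hjC : jN ≤ m + 1),
      ((jN : ℕ) : ℂ) * v (⟨jN, by omega⟩, ⟨m, by omega⟩) = 0 := by
    intro jN hj1 hj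
    have h0 := rel (m + 1) (jN - 1) (by omega) (by omega)
    rw [show (∑ c : Fin (m + 2) × Fin (m + 1),
        (if jN - 1 + 1 = (c.1 : ℕ) ∧ m + 1 = (c.2 : ℕ) + 1 then ((c.1 : ℕ) : ℂ) else 0) * v c)
      = ((jN : ℕ) : ℂ) * v (⟨jN, by omega⟩, ⟨m, by omega⟩) from ?_,
      show (∑ c : Fin (m + 2) × Fin (m + 1),
        (if jN - 1 = (c.1 : ℕ) ∧ m + 1 = (c.2 : ℕ) then ((m + 1 - (c.1 : ℕ) : ℕ) : ℂ) else 0) * v c)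
      = 0 from ?_] at h0
    · rw [add_zero] at h0
      exact h0
    · exact sum_ite_none_mul (fun z => by
        rintro ⟨-, h2⟩
        have := z.2.isLt
        omega) _ v
    · rw [sum_ite_point_mul ((⟨jN, by omega⟩ : Fin (m + 2)), (⟨m, by omega⟩ : Fin (m + 1)))
        (fun z => by
          constructor
          · rintro ⟨h1, h2⟩
            refine Prod.ext (Fin.ext ?_) (Fin.ext ?_) <;> simp <;> omega
          · rintro rfl
            constructor <;> simp <;> omega)]
  have relC2 : ∀ (jN j'N : ℕ) (hj1C : 1 ≤ jN) (hjC : jN ≤ m + 1) (hj'C : j'N + 1 ≤ m),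
      ((jN : ℕ) : ℂ) * v (⟨jN, by omega⟩, ⟨j'N, by omega⟩)
        + ((m + 1 - (jN - 1) : ℕ) : ℂ) * v (⟨jN - 1, by omega⟩, ⟨j'N + 1, by omega⟩) = 0 := by
    intro jN j'N hj1 hj hj'
    have h0 := rel (j'N + 1) (jN - 1) (by omega) (by omega)
    rw [show (∑ c : Fin (m + 2) × Fin (m + 1),
        (if jN - 1 + 1 = (c.1 : ℕ) ∧ j'N + 1 = (c.2 : ℕ) + 1 then ((c.1 : ℕ) : ℂ) else 0) * v c)
      = ((jN : ℕ) : ℂ) * v (⟨jN, by omega⟩, ⟨j'N, by omega⟩) from ?_,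
      show (∑ c : Fin (m + 2) × Fin (m + 1),
        (if jN - 1 = (c.1 : ℕ) ∧ j'N + 1 = (c.2 : ℕ) then ((m + 1 - (c.1 : ℕ) : ℕ) : ℂ) else 0) * v c)
      = ((m + 1 - (jN - 1) : ℕ) : ℂ) * v (⟨jN - 1, by omega⟩, ⟨j'N + 1, by omega⟩) from ?_] at h0
    · exact h0
    · rw [sum_ite_point_mul ((⟨jN - 1, by omega⟩ : Fin (m + 2)), (⟨j'N + 1, by omega⟩ : Fin (m + 1)))
        (fun z => by
          constructor
          · rintro ⟨h1, h2⟩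
            refine Prod.ext (Fin.ext ?_) (Fin.ext ?_) <;> simp <;> omega
          · rintro rfl
            constructor <;> simp <;> omega)]
    · rw [sum_ite_point_mul ((⟨jN, by omega⟩ : Fin (m + 2)), (⟨j'N, by omega⟩ : Fin (m + 1)))
        (fun z => by
          constructor
          · rintro ⟨h1, h2⟩
            refine Prod.ext (Fin.ext ?_) (Fin.ext ?_) <;> simp <;> omega
          · rintro rfl
            constructor <;> simp <;> omega)]
  -- Induction A: j + j' ≤ m
  have lemA : ∀ (n jN j'N : ℕ) (h0A : j'N = n) (hsumA : jN + j'N ≤ m),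
      v (⟨jN, by omega⟩, ⟨j'N, by omega⟩) = 0 := by
    intro n
    induction n with
    | zero =>
        intro jN j'N h0 hsum
        have h := relB jN j'N (by omega) (by omega)
        rw [if_neg (by omega), zero_add] at h
        have hc : ((m + 1 - jN : ℕ) : ℂ) ≠ 0 := by
          simp only [Ne, Nat.cast_eq_zero]
          omega
        have := mul_eq_zero.mp h
        tauto
    | succ n ih =>
        intro jN j'N h0 hsum
        have h := relB jN j'N (by omega) (by omega)
        rw [if_pos (by omega)] at h
        have h2 := ih (jN + 1) (j'N - 1) (by omega) (by omega)
        rw [h2, mul_zero, zero_add] at h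
        have hc : ((m + 1 - jN : ℕ) : ℂ) ≠ 0 := by
          simp only [Ne, Nat.cast_eq_zero]
          omega
        have := mul_eq_zero.mp h
        tauto
  -- Induction B: j + j' ≥ m + 1, descending in m - j'
  have lemB : ∀ (d jN j'N : ℕ) (hdB : m - j'N = d) (hjB2 : jN ≤ m + 1) (hj'B2 : j'N ≤ m) (hsB : m + 1 ≤ jN + j'N),
      v (⟨jN, by omega⟩, ⟨j'N, by omega⟩) = 0 := by
    intro d
    induction d with
    | zero =>
        intro jN j'N hd hj hj' hsum
        have hj'm : j'N = m := by omega
        subst hj'm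
        have h := relC1 jN (by omega) (by omega)
        have hc : ((jN : ℕ) : ℂ) ≠ 0 := by
          simp only [Ne, Nat.cast_eq_zero]
          omega
        have := mul_eq_zero.mp h
        tauto
    | succ d ih =>
        intro jN j'N hd hj hj' hsum
        have h := relC2 jN j'N (by omega) (by omega) (by omega)
        have h2 := ih (jN - 1) (j'N + 1) (by omega) (by omega) (by omega) (by omega)
        rw [h2, mul_zero, add_zero] at h
        have hc : ((jN : ℕ) : ℂ) ≠ 0 := by
          simp only [Ne, Nat.cast_eq_zero]
          omega
        have := mul_eq_zero.mp h
        tauto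
  funext z
  obtain ⟨j, j'⟩ := z
  have hj := j.isLt
  have hj' := j'.isLt
  by_cases h : (j : ℕ) + (j' : ℕ) ≤ m
  · have := lemA (j' : ℕ) (j : ℕ) (j' : ℕ) rfl h
    simpa using this
  · have := lemB (m - (j' : ℕ)) (j : ℕ) (j' : ℕ) rfl (by omega) (by omega) (by omega)
    simpa using this

lemma det_matC_one_ne (m : ℕ) : (matC m 1).det ≠ 0 := by
  intro h0
  obtain ⟨v, hv0, hv⟩ := Matrix.exists_mulVec_eq_zero_iff.mpr h0
  exact hv0 (matC_one_inj m v hv)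

end L32

namespace L32

lemma exp_arith (m : ℕ) :
    (m + 1) * ((m + 1) * (m + 2) / 2)
      = (m + 2) * (m * (m + 1) / 2) + (m + 1) * (m + 2) / 2 := by
  have hx : 2 * ((m + 1) * (m + 2) / 2) = (m + 1) * (m + 2) := by
    rw [Nat.mul_div_cancel']
    exact (Nat.even_mul_succ_self (m + 1)).two_dvd
  have hy : 2 * (m * (m + 1) / 2) = m * (m + 1) := by
    rw [Nat.mul_div_cancel']
    exact (Nat.even_mul_succ_self m).two_dvd
  refine Nat.eq_of_mul_eq_mul_left (show 0 < 2 by norm_num) ?_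
  calc 2 * ((m + 1) * ((m + 1) * (m + 2) / 2))
      = (m + 1) * (2 * ((m + 1) * (m + 2) / 2)) := by ring
    _ = (m + 1) * ((m + 1) * (m + 2)) := by rw [hx]
    _ = (m + 2) * (m * (m + 1)) + (m + 1) * (m + 2) := by ring
    _ = (m + 2) * (2 * (m * (m + 1) / 2)) + 2 * ((m + 1) * (m + 2) / 2) := by rw [hx, hy]
    _ = 2 * ((m + 2) * (m * (m + 1) / 2) + (m + 1) * (m + 2) / 2) := by ring

lemma det_matC_prod (m : ℕ) (s t α β : ℂ) (hs : s ≠ 0) (ht : t ≠ 0) :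
    (matC m (cmat s t α * dmat β)).det
      = (matC m 1).det * (s * t) ^ ((m + 1) * (m + 2) / 2) := by
  have hst : s * t ≠ 0 := mul_ne_zero hs ht
  have h2 := congrArg Matrix.det (M2 m β 1)
  rw [Matrix.det_mul, Matrix.det_mul, det_swapM, det_TUM, det_TUM, one_mul, mul_one,
    Matrix.one_mul] at h2
  have h1 := congrArg Matrix.det (M1 m s t α (dmat β))
  rw [Matrix.det_mul, Matrix.det_mul, det_swapM, det_SLM, det_SLM] at h1
  rw [← h2, exp_arith m, pow_add] at h1
  have hpow : (s * t) ^ ((m + 2) * (m * (m + 1) / 2)) ≠ 0 := pow_ne_zero _ hst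
  apply mul_left_cancel₀ hpow
  rw [← h1]
  ring

lemma eval_detP (m : ℕ) (x : (Fin 2 × Fin 2) → ℂ) (h00 : x (0, 0) ≠ 0)
    (hD : x (0, 0) * x (1, 1) - x (0, 1) * x (1, 0) ≠ 0) :
    eval x ((matP m).det)
      = (matC m 1).det * (x (0, 0) * x (1, 1) - x (0, 1) * x (1, 0)) ^ ((m + 1) * (m + 2) / 2) := by
  have ht : (x (0, 0) * x (1, 1) - x (0, 1) * x (1, 0)) / x (0, 0) ≠ 0 := div_ne_zero hD h00
  have hst : x (0, 0) * ((x (0, 0) * x (1, 1) - x (0, 1) * x (1, 0)) / x (0, 0))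
      = x (0, 0) * x (1, 1) - x (0, 1) * x (1, 0) := by
    rw [← mul_div_assoc]
    exact mul_div_cancel_left₀ _ h00
  have hp : (fun A A' => x (A, A'))
      = cmat (x (0, 0)) ((x (0, 0) * x (1, 1) - x (0, 1) * x (1, 0)) / x (0, 0)) (x (1, 0))
        * dmat (x (0, 1) / x (0, 0)) := by
    funext A A'
    fin_cases A <;> fin_cases A' <;>
      simp [Matrix.mul_apply, Fin.sum_univ_two] <;> simp [cmat, dmat] <;>
      (try field_simp [show (x 0 : ℂ) ≠ 0 from h00]) <;> (try ring)
  rw [RingHom.map_det, show (eval x).mapMatrix (matP m) = (matP m).map (eval x) from rfl,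
    matP_map m x, hp, det_matC_prod m _ _ _ _ h00 ht, hst]

theorem det_matP_eq' (m : ℕ) :
    ∃ c : ℂ, c ≠ 0 ∧
      (matP m).det = C c * Dpoly ^ ((m + 1) * (m + 2) / 2) := by
  refine ⟨(matC m 1).det, det_matC_one_ne m, ?_⟩
  have hXD : (X ((0 : Fin 2), (0 : Fin 2)) : R) * Dpoly ≠ 0 := by
    apply mul_ne_zero (X_ne_zero _)
    intro h
    have h2 := congrArg (eval (fun p : Fin 2 × Fin 2 => if p = (0, 0) ∨ p = (1, 1) then (1 : ℂ) else 0)) h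
    simp [Dpoly] at h2
  have key : X ((0 : Fin 2), (0 : Fin 2)) * Dpoly * ((matP m).det)
      = X ((0 : Fin 2), (0 : Fin 2)) * Dpoly * (C ((matC m 1).det) * Dpoly ^ ((m + 1) * (m + 2) / 2)) := by
    apply MvPolynomial.funext
    intro x
    simp only [map_mul, eval_X, map_pow, eval_C, map_sub, Dpoly]
    by_cases h00 : x (0, 0) = 0
    · rw [h00]; ring
    · by_cases hD : x (0, 0) * x (1, 1) - x (0, 1) * x (1, 0) = 0
      · rw [hD]; ring
      · rw [eval_detP m x h00 hD]
  exact mul_left_cancel₀ hXD key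

end L32


theorem det_matP_eq (m : ℕ) :
    ∃ c : ℂ, c ≠ 0 ∧
      (matP m).det = C c * Dpoly ^ ((m + 1) * (m + 2) / 2) :=
  L32.det_matP_eq' m
end

section
/- Let m ≥ 1 and N = (m+1)(m+2). Work in the polynomial ring R = ℂ[p₀₀, p₀₁, p₁₀, p₁₁] and let M ∈ M_N(R) be the matrix of P_p in fixed ordered monomial bases of V_{m+1,m} and V_{m,m+1}, with entries viewed as elements of R. Then every entry of the adjugate (classical adjoint) matrix of M is divisible in R by D^{m(m+1)/2}, where D = p₀₀p₁₁ − p₀₁p₁₀. (Paper: Lemma 3.4.) -/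
/-!
Lemma 3.4: for `m ≥ 1`, every entry of the adjugate (classical adjoint) of the
matrix of the symbol map `P_p` with generic entries (i.e. over
`R = ℂ[p₀₀, p₀₁, p₁₀, p₁₁]`) is divisible in `R` by `D^{m(m+1)/2}`, where
`D = p₀₀p₁₁ − p₀₁p₁₀`.
-/

open MvPolynomial

namespace Lem34

noncomputable section

abbrev S : Type := MvPolynomial (Fin 2 ⊕ Fin 2) R

@[simp] lemma expo_inl0 (a b c d : ℕ) : expo a b c d (Sum.inl 0) = a := rfl
@[simp] lemma expo_inl1 (a b c d : ℕ) : expo a b c d (Sum.inl 1) = b := rfl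
@[simp] lemma expo_inr0 (a b c d : ℕ) : expo a b c d (Sum.inr 0) = c := rfl
@[simp] lemma expo_inr1 (a b c d : ℕ) : expo a b c d (Sum.inr 1) = d := rfl

lemma expo_inj {a b c d a' b' c' d' : ℕ} (h : expo a b c d = expo a' b' c' d') :
    a = a' ∧ b = b' ∧ c = c' ∧ d = d' := by
  refine ⟨?_, ?_, ?_, ?_⟩
  · simpa using DFunLike.congr_fun h (Sum.inl 0)
  · simpa using DFunLike.congr_fun h (Sum.inl 1)
  · simpa using DFunLike.congr_fun h (Sum.inr 0)
  · simpa using DFunLike.congr_fun h (Sum.inr 1)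

lemma expo_ext (v : Fin 2 ⊕ Fin 2) (a b c d : ℕ) :
    expo a b c d v = Sum.elim ![a, b] ![c, d] v := rfl

lemma expo_add (a b c d a' b' c' d' : ℕ) :
    expo a b c d + expo a' b' c' d' = expo (a + a') (b + b') (c + c') (d + d') := by
  ext v
  rcases v with A | A <;> fin_cases A <;> simp

lemma expo_zero : expo 0 0 0 0 = 0 := by
  ext v; rcases v with A | A <;> fin_cases A <;> simp

lemma single_inl0 (n : ℕ) : Finsupp.single (Sum.inl 0 : Fin 2 ⊕ Fin 2) n = expo n 0 0 0 := by
  ext v; rcases v with A | A <;> fin_cases A <;> simp [Finsupp.single_apply]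
lemma single_inl1 (n : ℕ) : Finsupp.single (Sum.inl 1 : Fin 2 ⊕ Fin 2) n = expo 0 n 0 0 := by
  ext v; rcases v with A | A <;> fin_cases A <;> simp [Finsupp.single_apply]
lemma single_inr0 (n : ℕ) : Finsupp.single (Sum.inr 0 : Fin 2 ⊕ Fin 2) n = expo 0 0 n 0 := by
  ext v; rcases v with A | A <;> fin_cases A <;> simp [Finsupp.single_apply]
lemma single_inr1 (n : ℕ) : Finsupp.single (Sum.inr 1 : Fin 2 ⊕ Fin 2) n = expo 0 0 0 n := by
  ext v; rcases v with A | A <;> fin_cases A <;> simp [Finsupp.single_apply]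

lemma expo_sub_inl0 (a b c d : ℕ) :
    expo a b c d - Finsupp.single (Sum.inl 0) 1 = expo (a - 1) b c d := by
  ext v; rw [Finsupp.tsub_apply]
  rcases v with A | A <;> fin_cases A <;> simp [Finsupp.single_apply]

lemma expo_sub_inl1 (a b c d : ℕ) :
    expo a b c d - Finsupp.single (Sum.inl 1) 1 = expo a (b - 1) c d := by
  ext v; rw [Finsupp.tsub_apply]
  rcases v with A | A <;> fin_cases A <;> simp [Finsupp.single_apply]

lemma mono_eq_prod (a b c d : ℕ) :
    (monomial (expo a b c d) (1 : R) : S) =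
      X (Sum.inl 0) ^ a * X (Sum.inl 1) ^ b * X (Sum.inr 0) ^ c * X (Sum.inr 1) ^ d := by
  rw [X_pow_eq_monomial, X_pow_eq_monomial, X_pow_eq_monomial, X_pow_eq_monomial,
    monomial_mul, monomial_mul, monomial_mul, single_inl0, single_inl1, single_inr0,
    single_inr1, expo_add, expo_add, expo_add]
  simp

/-! ## The graded pieces -/

def Wgen (dp dt : ℕ) (q : Fin (dp + 1) × Fin (dt + 1)) : S :=
  monomial (expo q.1 (dp - (q.1 : ℕ)) q.2 (dt - (q.2 : ℕ))) 1

def W (dp dt : ℕ) : Submodule R S := Submodule.span R (Set.range (Wgen dp dt))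

lemma coeff_Wgen {dp dt : ℕ} (q q' : Fin (dp + 1) × Fin (dt + 1)) :
    coeff (expo q.1 (dp - (q.1 : ℕ)) q.2 (dt - (q.2 : ℕ))) (Wgen dp dt q') =
      if q' = q then 1 else 0 := by
  rw [Wgen, coeff_monomial]
  by_cases h : q' = q
  · subst h; simp
  · rw [if_neg h, if_neg]
    intro he
    obtain ⟨h1, -, h2, -⟩ := expo_inj he
    exact h (Prod.ext (Fin.ext h1) (Fin.ext h2))

lemma mem_W (x : R) {a b c d dp dt : ℕ} (h1 : a + b = dp) (h2 : c + d = dt) :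
    (monomial (expo a b c d) x : S) ∈ W dp dt := by
  have ha : a < dp + 1 := by omega
  have hc : c < dt + 1 := by omega
  have hb : b = dp - a := by omega
  have hd : d = dt - c := by omega
  subst hb hd
  have : (monomial (expo a (dp - a) c (dt - c)) x : S) = x • Wgen dp dt (⟨a, ha⟩, ⟨c, hc⟩) := by
    rw [Wgen, smul_monomial, smul_eq_mul, mul_one]
  rw [this]
  exact Submodule.smul_mem _ _ (Submodule.subset_span ⟨_, rfl⟩)

lemma W_repr {dp dt : ℕ} {f : S} (h : f ∈ W dp dt) :
    f = ∑ q : Fin (dp + 1) × Fin (dt + 1),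
        coeff (expo q.1 (dp - (q.1 : ℕ)) q.2 (dt - (q.2 : ℕ))) f • Wgen dp dt q := by
  obtain ⟨x, hx⟩ := (Submodule.mem_span_range_iff_exists_fun R).mp h
  have key : ∀ q0 : Fin (dp + 1) × Fin (dt + 1),
      coeff (expo q0.1 (dp - (q0.1 : ℕ)) q0.2 (dt - (q0.2 : ℕ))) f = x q0 := by
    intro q0
    rw [← hx, MvPolynomial.coeff_sum]
    rw [Finset.sum_eq_single q0]
    · rw [coeff_smul, coeff_Wgen, if_pos rfl, smul_eq_mul, mul_one]
    · intro q _ hq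
      rw [coeff_smul, coeff_Wgen, if_neg hq, smul_zero]
    · intro hmem; exact absurd (Finset.mem_univ q0) hmem
  rw [← hx]
  exact Finset.sum_congr rfl fun q _ => by rw [hx, key q]

lemma W_mul {f g : S} {dp dt dp' dt' : ℕ} (hf : f ∈ W dp dt) (hg : g ∈ W dp' dt') :
    f * g ∈ W (dp + dp') (dt + dt') := by
  obtain ⟨x, hx⟩ := (Submodule.mem_span_range_iff_exists_fun R).mp hf
  obtain ⟨y, hy⟩ := (Submodule.mem_span_range_iff_exists_fun R).mp hg
  rw [← hx, ← hy, Finset.sum_mul]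
  refine Submodule.sum_mem _ fun q _ => ?_
  rw [Finset.mul_sum]
  refine Submodule.sum_mem _ fun q' _ => ?_
  have h1 := q.1.isLt
  have h2 := q.2.isLt
  have h3 := q'.1.isLt
  have h4 := q'.2.isLt
  rw [smul_mul_assoc, mul_smul_comm, smul_smul]
  refine Submodule.smul_mem _ _ ?_
  rw [Wgen, Wgen, monomial_mul, expo_add, one_mul]
  exact mem_W _ (by omega) (by omega)

lemma W_pow {f : S} {dp dt : ℕ} (hf : f ∈ W dp dt) (n : ℕ) :
    f ^ n ∈ W (n * dp) (n * dt) := by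
  induction n with
  | zero =>
    rw [pow_zero]
    have : (1 : S) = monomial (expo 0 0 0 0) 1 := by rw [expo_zero]; simp
    rw [this]
    exact mem_W _ (by omega) (by omega)
  | succ n ih =>
    rw [pow_succ]
    have := W_mul ih hf
    rw [show (n + 1) * dp = n * dp + dp by ring, show (n + 1) * dt = n * dt + dt by ring]
    exact this

/-! ## Bases -/

def bb1 (m : ℕ) (c : Fin (m + 2) × Fin (m + 1)) : S :=
  monomial (expo c.1 (m + 1 - (c.1 : ℕ)) c.2 (m - (c.2 : ℕ))) 1

def bb2 (m : ℕ) (r : Fin (m + 2) × Fin (m + 1)) : S :=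
  monomial (expo r.2 (m - (r.2 : ℕ)) r.1 (m + 1 - (r.1 : ℕ))) 1

lemma bb1_eq_Wgen (m : ℕ) (c : Fin (m + 2) × Fin (m + 1)) : bb1 m c = Wgen (m + 1) m c := rfl

lemma bb2_eq_Wgen (m : ℕ) (r : Fin (m + 2) × Fin (m + 1)) :
    bb2 m r = Wgen m (m + 1) (r.2, r.1) := rfl

lemma bb1_mem (m : ℕ) (c : Fin (m + 2) × Fin (m + 1)) : bb1 m c ∈ W (m + 1) m := by
  have := c.1.isLt; have := c.2.isLt
  exact mem_W _ (by omega) (by omega)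

lemma bb2_mem (m : ℕ) (r : Fin (m + 2) × Fin (m + 1)) : bb2 m r ∈ W m (m + 1) := by
  have := r.1.isLt; have := r.2.isLt
  exact mem_W _ (by omega) (by omega)

lemma repr1 {m : ℕ} {f : S} (h : f ∈ W (m + 1) m) :
    f = ∑ c : Fin (m + 2) × Fin (m + 1),
        coeff (expo c.1 (m + 1 - (c.1 : ℕ)) c.2 (m - (c.2 : ℕ))) f • bb1 m c :=
  W_repr h

lemma repr2 {m : ℕ} {f : S} (h : f ∈ W m (m + 1)) :
    f = ∑ r : Fin (m + 2) × Fin (m + 1),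
        coeff (expo r.2 (m - (r.2 : ℕ)) r.1 (m + 1 - (r.1 : ℕ))) f • bb2 m r := by
  conv_lhs => rw [W_repr h]
  rw [Fintype.sum_prod_type, Fintype.sum_prod_type]
  exact Finset.sum_comm

lemma coeff_bb1 {m : ℕ} (r c : Fin (m + 2) × Fin (m + 1)) :
    coeff (expo r.1 (m + 1 - (r.1 : ℕ)) r.2 (m - (r.2 : ℕ))) (bb1 m c) =
      if c = r then 1 else 0 := coeff_Wgen r c

lemma coeff_bb2 {m : ℕ} (r c : Fin (m + 2) × Fin (m + 1)) :
    coeff (expo r.2 (m - (r.2 : ℕ)) r.1 (m + 1 - (r.1 : ℕ))) (bb2 m c) =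
      if c = r then 1 else 0 := by
  have := coeff_Wgen (dp := m) (dt := m + 1) (r.2, r.1) (c.2, c.1)
  rw [bb2_eq_Wgen, this]
  by_cases h : c = r
  · subst h; simp
  · rw [if_neg, if_neg h]
    intro he
    exact h (Prod.ext (congrArg Prod.snd he) (congrArg Prod.fst he))

lemma coeff_sum_bb1 {m : ℕ} (x : Fin (m + 2) × Fin (m + 1) → R) (r : Fin (m + 2) × Fin (m + 1)) :
    coeff (expo r.1 (m + 1 - (r.1 : ℕ)) r.2 (m - (r.2 : ℕ)))
      (∑ c : Fin (m + 2) × Fin (m + 1), x c • bb1 m c) = x r := by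
  rw [MvPolynomial.coeff_sum, Finset.sum_eq_single r]
  · rw [coeff_smul, coeff_bb1, if_pos rfl, smul_eq_mul, mul_one]
  · intro q _ hq; rw [coeff_smul, coeff_bb1, if_neg hq, smul_zero]
  · intro hm; exact absurd (Finset.mem_univ r) hm

lemma coeff_sum_bb2 {m : ℕ} (x : Fin (m + 2) × Fin (m + 1) → R) (r : Fin (m + 2) × Fin (m + 1)) :
    coeff (expo r.2 (m - (r.2 : ℕ)) r.1 (m + 1 - (r.1 : ℕ)))
      (∑ c : Fin (m + 2) × Fin (m + 1), x c • bb2 m c) = x r := by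
  rw [MvPolynomial.coeff_sum, Finset.sum_eq_single r]
  · rw [coeff_smul, coeff_bb2, if_pos rfl, smul_eq_mul, mul_one]
  · intro q _ hq; rw [coeff_smul, coeff_bb2, if_neg hq, smul_zero]
  · intro hm; exact absurd (Finset.mem_univ r) hm

/-! ## The substitution operators -/

def subst (q : Matrix (Fin 2) (Fin 2) R) : S →ₐ[R] S :=
  aeval (Sum.elim (fun A => X (Sum.inl A))
    (fun A => ∑ A' : Fin 2, C (q A A') * X (Sum.inr A')))

@[simp] lemma subst_X_inl (q : Matrix (Fin 2) (Fin 2) R) (A : Fin 2) :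
    subst q (X (Sum.inl A)) = X (Sum.inl A) := by simp [subst]

@[simp] lemma subst_X_inr (q : Matrix (Fin 2) (Fin 2) R) (A : Fin 2) :
    subst q (X (Sum.inr A)) = ∑ A' : Fin 2, C (q A A') * X (Sum.inr A') := by simp [subst]

@[simp] lemma subst_C (q : Matrix (Fin 2) (Fin 2) R) (x : R) : subst q (C x) = C x := by
  simp [subst, algebraMap_eq]

def qAdj : Matrix (Fin 2) (Fin 2) R :=
  Matrix.of ![![X (1, 1), -X (0, 1)], ![-X (1, 0), X (0, 0)]]

lemma subst_mono_mem (q : Matrix (Fin 2) (Fin 2) R) {a b c d dp dt : ℕ}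
    (h1 : a + b = dp) (h2 : c + d = dt) :
    subst q (monomial (expo a b c d) 1) ∈ W dp dt := by
  have hX0 : (X (Sum.inl (0 : Fin 2)) : S) ∈ W 1 0 := by
    have h : (X (Sum.inl (0 : Fin 2)) : S) = monomial (expo 1 0 0 0) 1 := by
      rw [← single_inl0, ← X_pow_eq_monomial, pow_one]
    exact h ▸ mem_W _ rfl rfl
  have hX1 : (X (Sum.inl (1 : Fin 2)) : S) ∈ W 1 0 := by
    have h : (X (Sum.inl (1 : Fin 2)) : S) = monomial (expo 0 1 0 0) 1 := by
      rw [← single_inl1, ← X_pow_eq_monomial, pow_one]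
    exact h ▸ mem_W _ rfl rfl
  have hX0r : (X (Sum.inr (0 : Fin 2)) : S) ∈ W 0 1 := by
    have h : (X (Sum.inr (0 : Fin 2)) : S) = monomial (expo 0 0 1 0) 1 := by
      rw [← single_inr0, ← X_pow_eq_monomial, pow_one]
    exact h ▸ mem_W _ rfl rfl
  have hX1r : (X (Sum.inr (1 : Fin 2)) : S) ∈ W 0 1 := by
    have h : (X (Sum.inr (1 : Fin 2)) : S) = monomial (expo 0 0 0 1) 1 := by
      rw [← single_inr1, ← X_pow_eq_monomial, pow_one]
    exact h ▸ mem_W _ rfl rfl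
  have hXl : ∀ (A : Fin 2) (n : ℕ), (X (Sum.inl A) : S) ^ n ∈ W n 0 := by
    intro A n
    have hX : (X (Sum.inl A) : S) ∈ W 1 0 := by
      fin_cases A
      · exact hX0
      · exact hX1
    have := W_pow hX n
    simpa using this
  have hXr : ∀ (A : Fin 2) (n : ℕ),
      ((∑ A' : Fin 2, C (q A A') * X (Sum.inr A')) : S) ^ n ∈ W 0 n := by
    intro A n
    have hX : ((∑ A' : Fin 2, C (q A A') * X (Sum.inr A')) : S) ∈ W 0 1 := by
      refine Submodule.sum_mem _ fun A' _ => ?_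
      rw [C_mul']
      refine Submodule.smul_mem _ _ ?_
      fin_cases A'
      · exact hX0r
      · exact hX1r
    have := W_pow hX n
    simpa using this
  rw [mono_eq_prod, map_mul, map_mul, map_mul, map_pow, map_pow, map_pow, map_pow,
    subst_X_inl, subst_X_inl, subst_X_inr, subst_X_inr]
  have step1 := W_mul (hXl 0 a) (hXl 1 b)
  have step2 := W_mul step1 (hXr 0 c)
  have step3 := W_mul step2 (hXr 1 d)
  rw [show dp = a + b + 0 + 0 by omega, show dt = 0 + 0 + c + d by omega]
  exact step3

def Phi1 (q : Matrix (Fin 2) (Fin 2) R) (m : ℕ) :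
    Matrix (Fin (m + 2) × Fin (m + 1)) (Fin (m + 2) × Fin (m + 1)) R :=
  fun r c => coeff (expo r.1 (m + 1 - (r.1 : ℕ)) r.2 (m - (r.2 : ℕ))) (subst q (bb1 m c))

def Phi2 (q : Matrix (Fin 2) (Fin 2) R) (m : ℕ) :
    Matrix (Fin (m + 2) × Fin (m + 1)) (Fin (m + 2) × Fin (m + 1)) R :=
  fun r c => coeff (expo r.2 (m - (r.2 : ℕ)) r.1 (m + 1 - (r.1 : ℕ))) (subst q (bb2 m c))

lemma rep_subst1 (q : Matrix (Fin 2) (Fin 2) R) (m : ℕ) (c : Fin (m + 2) × Fin (m + 1)) :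
    subst q (bb1 m c) = ∑ r : Fin (m + 2) × Fin (m + 1), Phi1 q m r c • bb1 m r :=
  repr1 (by
    have := c.1.isLt; have := c.2.isLt
    exact subst_mono_mem q (by omega) (by omega))

lemma rep_subst2 (q : Matrix (Fin 2) (Fin 2) R) (m : ℕ) (c : Fin (m + 2) × Fin (m + 1)) :
    subst q (bb2 m c) = ∑ r : Fin (m + 2) × Fin (m + 1), Phi2 q m r c • bb2 m r :=
  repr2 (by
    have := c.1.isLt; have := c.2.isLt
    exact subst_mono_mem q (by omega) (by omega))

/-! ## Linearity of the operators -/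

def PmapL : S →ₗ[R] S where
  toFun := Pmap
  map_add' f g := by
    simp only [Pmap, map_add, mul_add, Finset.sum_add_distrib]
  map_smul' r f := by
    simp only [Pmap, RingHom.id_apply, Finset.smul_sum]
    refine Finset.sum_congr rfl fun A _ => Finset.sum_congr rfl fun A' _ => ?_
    rw [(pderiv (Sum.inl A)).map_smul, mul_smul_comm, mul_smul_comm]

def Pe (f : S) : S := ∑ A : Fin 2, X (Sum.inr A) * pderiv (Sum.inl A) f

def PeL : S →ₗ[R] S where
  toFun := Pe
  map_add' f g := by
    simp only [Pe, map_add, mul_add, Finset.sum_add_distrib]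
  map_smul' r f := by
    simp only [Pe, RingHom.id_apply, Finset.smul_sum]
    refine Finset.sum_congr rfl fun A _ => ?_
    rw [(pderiv (Sum.inl A)).map_smul, mul_smul_comm]

/-! ## Expansion of `Pmap` on the basis -/

lemma Pmap_mem (m : ℕ) (c : Fin (m + 2) × Fin (m + 1)) : Pmap (bb1 m c) ∈ W m (m + 1) := by
  have hc1 := c.1.isLt; have hc2 := c.2.isLt
  refine Submodule.sum_mem _ fun A _ => Submodule.sum_mem _ fun A' _ => ?_
  rw [C_mul']
  refine Submodule.smul_mem _ _ ?_
  have hXr : ∀ B : Fin 2, (X (Sum.inr B) : S) ∈ W 0 1 := by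
    intro B
    have h0 : (X (Sum.inr (0 : Fin 2)) : S) = monomial (expo 0 0 1 0) 1 := by
      rw [← single_inr0, ← X_pow_eq_monomial, pow_one]
    have h1 : (X (Sum.inr (1 : Fin 2)) : S) = monomial (expo 0 0 0 1) 1 := by
      rw [← single_inr1, ← X_pow_eq_monomial, pow_one]
    fin_cases B
    · exact h0 ▸ mem_W _ rfl rfl
    · exact h1 ▸ mem_W _ rfl rfl
  have hd : pderiv (Sum.inl A) (bb1 m c) ∈ W m m := by
    have h0 : pderiv (Sum.inl (0 : Fin 2)) (bb1 m c) ∈ W m m := by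
      rw [bb1, pderiv_monomial, one_mul, expo_sub_inl0, expo_inl0]
      by_cases h : (c.1 : ℕ) = 0
      · rw [h]; simp
      · exact mem_W _ (by omega) (by omega)
    have h1 : pderiv (Sum.inl (1 : Fin 2)) (bb1 m c) ∈ W m m := by
      rw [bb1, pderiv_monomial, one_mul, expo_sub_inl1, expo_inl1]
      by_cases h : (c.1 : ℕ) = m + 1
      · rw [h]; simp
      · exact mem_W _ (by omega) (by omega)
    fin_cases A
    · exact h0
    · exact h1
  have hfin := W_mul (hXr A') hd
  rw [Nat.zero_add, Nat.add_comm 1 m] at hfin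
  exact hfin

lemma rep_P (m : ℕ) (c : Fin (m + 2) × Fin (m + 1)) :
    Pmap (bb1 m c) = ∑ r : Fin (m + 2) × Fin (m + 1), matP m r c • bb2 m r :=
  repr2 (Pmap_mem m c)

/-! ## The intertwining relation -/

lemma pderiv_subst (q : Matrix (Fin 2) (Fin 2) R) (A : Fin 2) (f : S) :
    pderiv (Sum.inl A) (subst q f) = subst q (pderiv (Sum.inl A) f) := by
  induction f using MvPolynomial.induction_on with
  | C a => simp
  | add f g hf hg => simp [map_add, hf, hg]
  | mul_X f v hf =>
    have hX : pderiv (Sum.inl A) (subst q (X v)) = subst q (pderiv (Sum.inl A) (X v)) := by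
      rcases v with B | B
      · rcases eq_or_ne A B with rfl | h
        · rw [subst_X_inl, pderiv_X_self, map_one]
        · have hne : (Sum.inl A : Fin 2 ⊕ Fin 2) ≠ Sum.inl B := by simpa using h
          rw [subst_X_inl, pderiv_X, Pi.single_eq_of_ne' hne, map_zero]
      · rw [pderiv_X, Pi.single_eq_of_ne' (by simp), map_zero, subst_X_inr, map_sum]
        refine Finset.sum_eq_zero fun A' _ => ?_
        rw [pderiv_mul, pderiv_C, pderiv_X, Pi.single_eq_of_ne' (by simp)]
        simp
    rw [map_mul, pderiv_mul, pderiv_mul, map_add, map_mul, map_mul, hf, hX]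

lemma intertwine (f : S) : Pmap (subst pGen f) = subst pGen (Pe f) := by
  rw [Pmap, Pe, map_sum]
  refine Finset.sum_congr rfl fun A _ => ?_
  rw [map_mul, subst_X_inr, Finset.sum_mul]
  refine Finset.sum_congr rfl fun A' _ => ?_
  rw [pderiv_subst, mul_assoc]

/-! ## `qAdj` inverts `pGen` up to `Dpoly` -/

lemma subst_subst_key (A A1 : Fin 2) : subst qAdj (C (pGen A A1) * X (Sum.inr A1)) =
    C (pGen A A1) * ∑ B : Fin 2, C (qAdj A1 B) * X (Sum.inr B) := by
  rw [map_mul, subst_C, subst_X_inr]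

lemma subst_subst_X (A : Fin 2) :
    subst qAdj (subst pGen (X (Sum.inr A))) = C Dpoly * X (Sum.inr A) := by
  fin_cases A
  · show subst qAdj (subst pGen (X (Sum.inr (0 : Fin 2)))) = C Dpoly * X (Sum.inr (0 : Fin 2))
    rw [subst_X_inr, map_sum, Fin.sum_univ_two, subst_subst_key, subst_subst_key,
      Fin.sum_univ_two, Fin.sum_univ_two]
    simp only [pGen, qAdj, Dpoly, Matrix.of_apply, Matrix.cons_val_zero, Matrix.cons_val_one,
      Matrix.head_cons, map_sub, map_mul, map_neg]
    ring
  · show subst qAdj (subst pGen (X (Sum.inr (1 : Fin 2)))) = C Dpoly * X (Sum.inr (1 : Fin 2))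
    rw [subst_X_inr, map_sum, Fin.sum_univ_two, subst_subst_key, subst_subst_key,
      Fin.sum_univ_two, Fin.sum_univ_two]
    simp only [pGen, qAdj, Dpoly, Matrix.of_apply, Matrix.cons_val_zero, Matrix.cons_val_one,
      Matrix.head_cons, map_sub, map_mul, map_neg]
    ring

lemma subst_subst_mono (a b c d : ℕ) :
    subst qAdj (subst pGen (monomial (expo a b c d) 1)) =
      C (Dpoly ^ (c + d)) * monomial (expo a b c d) 1 := by
  rw [mono_eq_prod]
  simp only [map_mul, map_pow, subst_X_inl, subst_subst_X]
  ring

lemma subst_subst_bb2 (m : ℕ) (r : Fin (m + 2) × Fin (m + 1)) :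
    subst qAdj (subst pGen (bb2 m r)) = Dpoly ^ (m + 1) • bb2 m r := by
  have h := r.1.isLt
  rw [bb2, subst_subst_mono, show (r.1 : ℕ) + (m + 1 - (r.1 : ℕ)) = m + 1 by omega, C_mul']

lemma subst_subst_bb1 (m : ℕ) (c : Fin (m + 2) × Fin (m + 1)) :
    subst qAdj (subst pGen (bb1 m c)) = Dpoly ^ m • bb1 m c := by
  have h := c.2.isLt
  rw [bb1, subst_subst_mono, show (c.2 : ℕ) + (m - (c.2 : ℕ)) = m by omega, C_mul']

/-! ## The monomial matrix of `Pe` -/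

lemma Xr0_mul_mono (a b c d : ℕ) (k : R) :
    (X (Sum.inr 0) : S) * monomial (expo a b c d) k = monomial (expo a b (c + 1) d) k := by
  have h : (X (Sum.inr (0 : Fin 2)) : S) = monomial (expo 0 0 1 0) 1 := by
    rw [← single_inr0, ← X_pow_eq_monomial, pow_one]
  rw [h, monomial_mul, expo_add, one_mul, Nat.zero_add, Nat.zero_add, Nat.zero_add,
    Nat.add_comm 1 c]

lemma Xr1_mul_mono (a b c d : ℕ) (k : R) :
    (X (Sum.inr 1) : S) * monomial (expo a b c d) k = monomial (expo a b c (d + 1)) k := by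
  have h : (X (Sum.inr (1 : Fin 2)) : S) = monomial (expo 0 0 0 1) 1 := by
    rw [← single_inr1, ← X_pow_eq_monomial, pow_one]
  rw [h, monomial_mul, expo_add, one_mul, Nat.zero_add, Nat.zero_add, Nat.zero_add,
    Nat.add_comm 1 d]

def Ec (m : ℕ) : Matrix (Fin (m + 2) × Fin (m + 1)) (Fin (m + 2) × Fin (m + 1)) ℂ :=
  fun r c =>
    (if (r.1 : ℕ) = (c.2 : ℕ) + 1 ∧ (r.2 : ℕ) + 1 = (c.1 : ℕ) then ((c.1 : ℕ) : ℂ) else 0) +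
    (if (r.1 : ℕ) = (c.2 : ℕ) ∧ (r.2 : ℕ) = (c.1 : ℕ) then ((m + 1 - (c.1 : ℕ) : ℕ) : ℂ) else 0)

def EcR (m : ℕ) : Matrix (Fin (m + 2) × Fin (m + 1)) (Fin (m + 2) × Fin (m + 1)) R :=
  (Ec m).map (C : ℂ → R)

lemma rep_Pe (m : ℕ) (c : Fin (m + 2) × Fin (m + 1)) :
    Pe (bb1 m c) = ∑ r : Fin (m + 2) × Fin (m + 1), EcR m r c • bb2 m r := by
  have hc1 := c.1.isLt
  have hc2 := c.2.isLt
  have t0 : (X (Sum.inr (0 : Fin 2)) : S) * pderiv (Sum.inl (0 : Fin 2)) (bb1 m c) =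
      monomial (expo ((c.1 : ℕ) - 1) (m + 1 - (c.1 : ℕ)) ((c.2 : ℕ) + 1) (m - (c.2 : ℕ)))
        (((c.1 : ℕ) : R)) := by
    rw [bb1, pderiv_monomial, one_mul, expo_sub_inl0, expo_inl0, Xr0_mul_mono]
  have t1 : (X (Sum.inr (1 : Fin 2)) : S) * pderiv (Sum.inl (1 : Fin 2)) (bb1 m c) =
      monomial (expo (c.1 : ℕ) (m - (c.1 : ℕ)) (c.2 : ℕ) (m + 1 - (c.2 : ℕ)))
        (((m + 1 - (c.1 : ℕ) : ℕ) : R)) := by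
    rw [bb1, pderiv_monomial, one_mul, expo_sub_inl1, expo_inl1, Xr1_mul_mono,
      show m + 1 - (c.1 : ℕ) - 1 = m - (c.1 : ℕ) from by omega,
      show m - (c.2 : ℕ) + 1 = m + 1 - (c.2 : ℕ) from by omega]
  have lhs : Pe (bb1 m c) =
      monomial (expo ((c.1 : ℕ) - 1) (m + 1 - (c.1 : ℕ)) ((c.2 : ℕ) + 1) (m - (c.2 : ℕ)))
        (((c.1 : ℕ) : R)) +
      monomial (expo (c.1 : ℕ) (m - (c.1 : ℕ)) (c.2 : ℕ) (m + 1 - (c.2 : ℕ)))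
        (((m + 1 - (c.1 : ℕ) : ℕ) : R)) := by
    rw [Pe, Fin.sum_univ_two, t0, t1]
  have split : ∑ r : Fin (m + 2) × Fin (m + 1), EcR m r c • bb2 m r =
      (∑ r : Fin (m + 2) × Fin (m + 1),
        (C (if (r.1 : ℕ) = (c.2 : ℕ) + 1 ∧ (r.2 : ℕ) + 1 = (c.1 : ℕ) then ((c.1 : ℕ) : ℂ)
          else 0) : R) • bb2 m r) +
      ∑ r : Fin (m + 2) × Fin (m + 1),
        (C (if (r.1 : ℕ) = (c.2 : ℕ) ∧ (r.2 : ℕ) = (c.1 : ℕ) then ((m + 1 - (c.1 : ℕ) : ℕ) : ℂ)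
          else 0) : R) • bb2 m r := by
    rw [← Finset.sum_add_distrib]
    refine Finset.sum_congr rfl fun r _ => ?_
    rw [EcR, Matrix.map_apply, Ec, map_add, add_smul]
  have S1 : (∑ r : Fin (m + 2) × Fin (m + 1),
      (C (if (r.1 : ℕ) = (c.2 : ℕ) + 1 ∧ (r.2 : ℕ) + 1 = (c.1 : ℕ) then ((c.1 : ℕ) : ℂ)
        else 0) : R) • bb2 m r) =
      monomial (expo ((c.1 : ℕ) - 1) (m + 1 - (c.1 : ℕ)) ((c.2 : ℕ) + 1) (m - (c.2 : ℕ)))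
        (((c.1 : ℕ) : R)) := by
    by_cases hj : (c.1 : ℕ) = 0
    · rw [hj]
      rw [Finset.sum_eq_zero]
      · rw [Nat.cast_zero, monomial_zero]
      · intro r _
        rw [if_neg (by omega), map_zero, zero_smul]
    · have hr1a : (c.2 : ℕ) + 1 < m + 2 := by omega
      have hr1b : (c.1 : ℕ) - 1 < m + 1 := by omega
      rw [Finset.sum_eq_single (⟨(c.2 : ℕ) + 1, hr1a⟩, ⟨(c.1 : ℕ) - 1, hr1b⟩)]
      · rw [if_pos ⟨rfl, by simp; omega⟩, bb2, smul_monomial, smul_eq_mul, mul_one, map_natCast]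
        congr 1
        have e1 : ((⟨(c.1 : ℕ) - 1, hr1b⟩ : Fin (m + 1)) : ℕ) = (c.1 : ℕ) - 1 := rfl
        have e2 : ((⟨(c.2 : ℕ) + 1, hr1a⟩ : Fin (m + 2)) : ℕ) = (c.2 : ℕ) + 1 := rfl
        rw [e1, e2, show m - ((c.1 : ℕ) - 1) = m + 1 - (c.1 : ℕ) from by omega,
          show m + 1 - ((c.2 : ℕ) + 1) = m - (c.2 : ℕ) from by omega]
      · intro r _ hr
        rw [if_neg, map_zero, zero_smul]
        rintro ⟨h1, h2⟩
        exact hr (Prod.ext (Fin.ext (by simpa using h1)) (Fin.ext (by simp; omega)))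
      · intro hm; exact absurd (Finset.mem_univ _) hm
  have S2 : (∑ r : Fin (m + 2) × Fin (m + 1),
      (C (if (r.1 : ℕ) = (c.2 : ℕ) ∧ (r.2 : ℕ) = (c.1 : ℕ) then ((m + 1 - (c.1 : ℕ) : ℕ) : ℂ)
        else 0) : R) • bb2 m r) =
      monomial (expo (c.1 : ℕ) (m - (c.1 : ℕ)) (c.2 : ℕ) (m + 1 - (c.2 : ℕ)))
        (((m + 1 - (c.1 : ℕ) : ℕ) : R)) := by
    by_cases hj : (c.1 : ℕ) ≤ m
    · have hr2a : (c.2 : ℕ) < m + 2 := by omega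
      have hr2b : (c.1 : ℕ) < m + 1 := by omega
      rw [Finset.sum_eq_single (⟨(c.2 : ℕ), hr2a⟩, ⟨(c.1 : ℕ), hr2b⟩)]
      · rw [if_pos ⟨rfl, rfl⟩, bb2, smul_monomial, smul_eq_mul, mul_one, map_natCast]
      · intro r _ hr
        rw [if_neg, map_zero, zero_smul]
        rintro ⟨h1, h2⟩
        exact hr (Prod.ext (Fin.ext (by simpa using h1)) (Fin.ext (by simpa using h2)))
      · intro hm; exact absurd (Finset.mem_univ _) hm
    · have hj1 : (c.1 : ℕ) = m + 1 := by omega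
      rw [Finset.sum_eq_zero]
      · rw [show m + 1 - (c.1 : ℕ) = 0 from by omega, Nat.cast_zero, monomial_zero]
      · intro r _
        have := r.2.isLt
        rw [if_neg (by omega), map_zero, zero_smul]
  rw [lhs, split, S1, S2]

/-! ## Matrix identities -/

lemma Pmap_sum (m : ℕ) (x : Fin (m + 2) × Fin (m + 1) → R) :
    Pmap (∑ k : Fin (m + 2) × Fin (m + 1), x k • bb1 m k) =
      ∑ k : Fin (m + 2) × Fin (m + 1), x k • Pmap (bb1 m k) := by
  exact (map_sum PmapL _ _).trans (Finset.sum_congr rfl fun k _ => PmapL.map_smul _ _)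

lemma MI1 (m : ℕ) : matP m * Phi1 pGen m = Phi2 pGen m * EcR m := by
  refine Matrix.ext fun r c => ?_
  rw [Matrix.mul_apply, Matrix.mul_apply]
  have lhs : Pmap (subst pGen (bb1 m c)) =
      ∑ r' : Fin (m + 2) × Fin (m + 1),
        (∑ k : Fin (m + 2) × Fin (m + 1), matP m r' k * Phi1 pGen m k c) • bb2 m r' := by
    rw [rep_subst1, Pmap_sum]
    simp only [rep_P, Finset.smul_sum, smul_smul]
    rw [Finset.sum_comm]
    refine Finset.sum_congr rfl fun r' _ => ?_
    rw [← Finset.sum_smul]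
    exact congrArg (· • bb2 m r') (Finset.sum_congr rfl fun k _ => mul_comm _ _)
  have rhs : subst pGen (Pe (bb1 m c)) =
      ∑ r' : Fin (m + 2) × Fin (m + 1),
        (∑ k : Fin (m + 2) × Fin (m + 1), Phi2 pGen m r' k * EcR m k c) • bb2 m r' := by
    rw [rep_Pe, map_sum]
    simp only [map_smul, rep_subst2, Finset.smul_sum, smul_smul]
    rw [Finset.sum_comm]
    refine Finset.sum_congr rfl fun r' _ => ?_
    rw [← Finset.sum_smul]
    exact congrArg (· • bb2 m r') (Finset.sum_congr rfl fun k _ => mul_comm _ _)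
  have h := intertwine (bb1 m c)
  rw [lhs, rhs] at h
  have h2 := congrArg (coeff (expo (r.2 : ℕ) (m - (r.2 : ℕ)) (r.1 : ℕ) (m + 1 - (r.1 : ℕ)))) h
  rwa [coeff_sum_bb2, coeff_sum_bb2] at h2

lemma MI2 (m : ℕ) : Phi2 qAdj m * Phi2 pGen m =
    Dpoly ^ (m + 1) • (1 : Matrix (Fin (m + 2) × Fin (m + 1)) (Fin (m + 2) × Fin (m + 1)) R) := by
  refine Matrix.ext fun r c => ?_
  rw [Matrix.mul_apply, Matrix.smul_apply, Matrix.one_apply]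
  have lhs : subst qAdj (subst pGen (bb2 m c)) =
      ∑ r' : Fin (m + 2) × Fin (m + 1),
        (∑ k : Fin (m + 2) × Fin (m + 1), Phi2 qAdj m r' k * Phi2 pGen m k c) • bb2 m r' := by
    rw [rep_subst2 pGen, map_sum]
    simp only [map_smul, rep_subst2 qAdj, Finset.smul_sum, smul_smul]
    rw [Finset.sum_comm]
    refine Finset.sum_congr rfl fun r' _ => ?_
    rw [← Finset.sum_smul]
    exact congrArg (· • bb2 m r') (Finset.sum_congr rfl fun k _ => mul_comm _ _)
  have h := subst_subst_bb2 m c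
  rw [lhs] at h
  have h2 := congrArg (coeff (expo (r.2 : ℕ) (m - (r.2 : ℕ)) (r.1 : ℕ) (m + 1 - (r.1 : ℕ)))) h
  rw [coeff_sum_bb2, coeff_smul, coeff_bb2] at h2
  rw [h2]
  by_cases hrc : r = c
  · subst hrc; simp
  · rw [if_neg (fun hh => hrc hh.symm), if_neg hrc, smul_zero]

lemma MI3 (m : ℕ) : Phi1 qAdj m * Phi1 pGen m =
    Dpoly ^ m • (1 : Matrix (Fin (m + 2) × Fin (m + 1)) (Fin (m + 2) × Fin (m + 1)) R) := by
  refine Matrix.ext fun r c => ?_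
  rw [Matrix.mul_apply, Matrix.smul_apply, Matrix.one_apply]
  have lhs : subst qAdj (subst pGen (bb1 m c)) =
      ∑ r' : Fin (m + 2) × Fin (m + 1),
        (∑ k : Fin (m + 2) × Fin (m + 1), Phi1 qAdj m r' k * Phi1 pGen m k c) • bb1 m r' := by
    rw [rep_subst1 pGen, map_sum]
    simp only [map_smul, rep_subst1 qAdj, Finset.smul_sum, smul_smul]
    rw [Finset.sum_comm]
    refine Finset.sum_congr rfl fun r' _ => ?_
    rw [← Finset.sum_smul]
    exact congrArg (· • bb1 m r') (Finset.sum_congr rfl fun k _ => mul_comm _ _)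
  have h := subst_subst_bb1 m c
  rw [lhs] at h
  have h2 := congrArg (coeff (expo (r.1 : ℕ) (m + 1 - (r.1 : ℕ)) (r.2 : ℕ) (m - (r.2 : ℕ)))) h
  rw [coeff_sum_bb1, coeff_smul, coeff_bb1] at h2
  rw [h2]
  by_cases hrc : r = c
  · subst hrc; simp
  · rw [if_neg (fun hh => hrc hh.symm), if_neg hrc, smul_zero]

/-! ## `Ec` is invertible -/

lemma detEc_ne (m : ℕ) : (Ec m).det ≠ 0 := by
  intro hdet
  obtain ⟨v, hv0, hv⟩ := Matrix.exists_mulVec_eq_zero_iff.mpr hdet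
  apply hv0
  have row : ∀ (i i' : ℕ) (hi : i < m + 2) (hi' : i' < m + 1),
      (∑ cc : Fin (m + 2) × Fin (m + 1),
        (if i = (cc.2 : ℕ) + 1 ∧ i' + 1 = (cc.1 : ℕ) then ((cc.1 : ℕ) : ℂ) else 0) * v cc) +
      (∑ cc : Fin (m + 2) × Fin (m + 1),
        (if i = (cc.2 : ℕ) ∧ i' = (cc.1 : ℕ) then ((m + 1 - (cc.1 : ℕ) : ℕ) : ℂ) else 0)
          * v cc) = 0 := by
    intro i i' hi hi'
    have h0 := congrFun hv (⟨i, hi⟩, ⟨i', hi'⟩)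
    rw [Matrix.mulVec, Pi.zero_apply] at h0
    rw [← Finset.sum_add_distrib]
    have hsum : ∑ cc : Fin (m + 2) × Fin (m + 1),
        ((if i = (cc.2 : ℕ) + 1 ∧ i' + 1 = (cc.1 : ℕ) then ((cc.1 : ℕ) : ℂ) else 0) * v cc +
         (if i = (cc.2 : ℕ) ∧ i' = (cc.1 : ℕ) then ((m + 1 - (cc.1 : ℕ) : ℕ) : ℂ) else 0) * v cc)
        = ∑ cc : Fin (m + 2) × Fin (m + 1), Ec m (⟨i, hi⟩, ⟨i', hi'⟩) cc * v cc :=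
      Finset.sum_congr rfl fun cc _ => by rw [Ec, add_mul]
    rw [hsum]
    exact h0
  -- Rows with first index 0 : kill v (j, 0) for j ≤ m.
  have L0 : ∀ (j : ℕ) (hj : j < m + 2) (hjm : j ≤ m) (h0 : (0 : ℕ) < m + 1),
      v (⟨j, hj⟩, ⟨0, h0⟩) = 0 := by
    intro j hj hjm h0
    have hr := row 0 j (by omega) (by omega)
    rw [Finset.sum_eq_zero (fun cc _ => by rw [if_neg (by omega), zero_mul]),
      Finset.sum_eq_single ((⟨j, hj⟩, ⟨0, h0⟩) : Fin (m + 2) × Fin (m + 1))] at hr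
    · rw [if_pos ⟨rfl, rfl⟩, zero_add] at hr
      have hne : ((m + 1 - j : ℕ) : ℂ) ≠ 0 := Nat.cast_ne_zero.mpr (by omega)
      exact (mul_eq_zero.mp hr).resolve_left hne
    · intro cc _ hcc
      rw [if_neg, zero_mul]
      rintro ⟨h1, h2⟩
      exact hcc (Prod.ext (Fin.ext (show (cc.1 : ℕ) = j by omega))
        (Fin.ext (show (cc.2 : ℕ) = 0 by omega)))
    · intro hm; exact absurd (Finset.mem_univ _) hm
  -- Rows with first index m + 1 : kill v (a+1, m).
  have L2 : ∀ (a : ℕ) (ha : a + 1 < m + 2) (hm2 : m < m + 1),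
      v (⟨a + 1, ha⟩, ⟨m, hm2⟩) = 0 := by
    intro a ha hm2
    have hr := row (m + 1) a (by omega) (by omega)
    rw [Finset.sum_eq_single ((⟨a + 1, ha⟩, ⟨m, hm2⟩) : Fin (m + 2) × Fin (m + 1))] at hr
    rotate_left
    · intro cc _ hcc
      rw [if_neg, zero_mul]
      rintro ⟨h1, h2⟩
      exact hcc (Prod.ext (Fin.ext (show (cc.1 : ℕ) = a + 1 by omega))
        (Fin.ext (show (cc.2 : ℕ) = m by omega)))
    · intro hm; exact absurd (Finset.mem_univ _) hm
    rw [if_pos ⟨rfl, rfl⟩] at hr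
    rw [Finset.sum_eq_zero (fun cc _ => by
      rw [if_neg, zero_mul]
      rintro ⟨h1, h2⟩
      have := cc.2.isLt
      omega), add_zero] at hr
    have hne : ((a + 1 : ℕ) : ℂ) ≠ 0 := Nat.cast_ne_zero.mpr (by omega)
    have hmul : ((a + 1 : ℕ) : ℂ) * v (⟨a + 1, ha⟩, ⟨m, hm2⟩) = 0 := by
      simpa using hr
    exact (mul_eq_zero.mp hmul).resolve_left hne
  -- Generic two-term rows.
  have Emid : ∀ (a b : ℕ) (ha : a < m + 1) (hb : b + 1 ≤ m),
      ((a + 1 : ℕ) : ℂ) * v (⟨a + 1, by omega⟩, ⟨b, by omega⟩) +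
      ((m + 1 - a : ℕ) : ℂ) * v (⟨a, by omega⟩, ⟨b + 1, by omega⟩) = 0 := by
    intro a b ha hb
    have hr := row (b + 1) a (by omega) (by omega)
    rw [Finset.sum_eq_single ((⟨a + 1, by omega⟩, ⟨b, by omega⟩) :
        Fin (m + 2) × Fin (m + 1))] at hr
    rotate_left
    · intro cc _ hcc
      rw [if_neg, zero_mul]
      rintro ⟨h1, h2⟩
      exact hcc (Prod.ext (Fin.ext (show (cc.1 : ℕ) = a + 1 by omega))
        (Fin.ext (show (cc.2 : ℕ) = b by omega)))
    · intro hm; exact absurd (Finset.mem_univ _) hm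
    rw [Finset.sum_eq_single ((⟨a, by omega⟩, ⟨b + 1, by omega⟩) :
        Fin (m + 2) × Fin (m + 1))] at hr
    rotate_left
    · intro cc _ hcc
      rw [if_neg, zero_mul]
      rintro ⟨h1, h2⟩
      exact hcc (Prod.ext (Fin.ext (show (cc.1 : ℕ) = a by omega))
        (Fin.ext (show (cc.2 : ℕ) = b + 1 by omega)))
    · intro hm; exact absurd (Finset.mem_univ _) hm
    rw [if_pos ⟨rfl, rfl⟩, if_pos ⟨rfl, rfl⟩] at hr
    exact hr
  -- Kill the region j + j' ≤ m by upward induction on j'.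
  have Z1 : ∀ (j' : ℕ) (hj' : j' < m + 1), ∀ (j : ℕ) (hj : j < m + 2), j + j' ≤ m →
      v (⟨j, hj⟩, ⟨j', hj'⟩) = 0 := by
    intro j'
    induction j' with
    | zero => intro hj' j hj hsum; exact L0 j hj (by omega) hj'
    | succ b ih =>
      intro hj' j hj hsum
      have heq := Emid j b (by omega) (by omega)
      have hz := ih (by omega) (j + 1) (by omega) (by omega)
      rw [hz, mul_zero, zero_add] at heq
      have hne : ((m + 1 - j : ℕ) : ℂ) ≠ 0 := Nat.cast_ne_zero.mpr (by omega)
      exact (mul_eq_zero.mp heq).resolve_left hne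
  -- Kill the region j + j' ≥ m + 1 by downward induction (k = m - j').
  have Z2 : ∀ (k a b : ℕ) (ha : a + 1 < m + 2) (hb : b < m + 1), b = m - k →
      m + 1 ≤ a + 1 + b → v (⟨a + 1, ha⟩, ⟨b, hb⟩) = 0 := by
    intro k
    induction k with
    | zero =>
      intro a b ha hb hbk hsum
      have hbm : b = m := by omega
      subst hbm
      exact L2 a ha hb
    | succ k ih =>
      intro a b ha hb hbk hsum
      by_cases hk : k + 1 ≤ m
      · by_cases hkedge : b = m - k
        · exact ih a b ha hb hkedge hsum
        · have hb1 : b + 1 ≤ m := by omega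
          have heq := Emid a b (by omega) hb1
          have ha1 : 1 ≤ a := by omega
          have hz : v (⟨a, by omega⟩, ⟨b + 1, by omega⟩) = 0 := by
            have hih := ih (a - 1) (b + 1) (by omega) (by omega) (by omega) (by omega)
            have he : (⟨a - 1 + 1, by omega⟩ : Fin (m + 2)) = ⟨a, by omega⟩ :=
              Fin.ext (show a - 1 + 1 = a by omega)
            rwa [he] at hih
          rw [hz, mul_zero, add_zero] at heq
          have hne : ((a + 1 : ℕ) : ℂ) ≠ 0 := Nat.cast_ne_zero.mpr (by omega)
          exact (mul_eq_zero.mp heq).resolve_left hne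
      · exact ih a b ha hb (by omega) hsum
  funext r
  obtain ⟨⟨j, hj⟩, ⟨j', hj'⟩⟩ := r
  rw [Pi.zero_apply]
  by_cases hcase : j + j' ≤ m
  · exact Z1 j' hj' j hj hcase
  · have hj1 : 1 ≤ j := by omega
    have h := Z2 (m - j') (j - 1) j' (by omega) hj' (by omega) (by omega)
    have he : (⟨j - 1 + 1, by omega⟩ : Fin (m + 2)) = ⟨j, hj⟩ :=
      Fin.ext (show j - 1 + 1 = j by omega)
    rwa [he] at h

/-! ## The adjugate substitution symmetry -/

def alf : R →ₐ[ℂ] R := aeval (fun w : Fin 2 × Fin 2 => qAdj w.1 w.2)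

lemma alf_pGen (A A' : Fin 2) : alf (pGen A A') = qAdj A A' := by
  simp [alf, pGen]

lemma alf_D : alf Dpoly = Dpoly := by
  have h00 : alf (X ((0 : Fin 2), (0 : Fin 2))) = X ((1 : Fin 2), (1 : Fin 2)) := by
    have := alf_pGen 0 0
    simpa [pGen, qAdj] using this
  have h11 : alf (X ((1 : Fin 2), (1 : Fin 2))) = X ((0 : Fin 2), (0 : Fin 2)) := by
    have := alf_pGen 1 1
    simpa [pGen, qAdj] using this
  have h01 : alf (X ((0 : Fin 2), (1 : Fin 2))) = -X ((0 : Fin 2), (1 : Fin 2)) := by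
    have := alf_pGen 0 1
    simpa [pGen, qAdj] using this
  have h10 : alf (X ((1 : Fin 2), (0 : Fin 2))) = -X ((1 : Fin 2), (0 : Fin 2)) := by
    have := alf_pGen 1 0
    simpa [pGen, qAdj] using this
  rw [Dpoly, map_sub, map_mul, map_mul, h00, h11, h01, h10]
  ring

lemma map_subst (f : S) :
    MvPolynomial.map (alf : R →+* R) (subst pGen f) =
      subst qAdj (MvPolynomial.map (alf : R →+* R) f) := by
  induction f using MvPolynomial.induction_on with
  | C a => rw [subst_C, map_C, subst_C]
  | add f g hf hg => rw [map_add, map_add, hf, hg, map_add, map_add]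
  | mul_X f v hf =>
    have hX : MvPolynomial.map (alf : R →+* R) (subst pGen (X v)) =
        subst qAdj (MvPolynomial.map (alf : R →+* R) (X v)) := by
      rcases v with B | B
      · rw [subst_X_inl, map_X]; exact (subst_X_inl _ _).symm
      · rw [subst_X_inr, map_X, subst_X_inr, map_sum]
        refine Finset.sum_congr rfl fun A' _ => ?_
        rw [map_mul, map_C, map_X]
        rw [show ((alf : R →+* R) (pGen B A')) = qAdj B A' from alf_pGen B A']
    rw [map_mul, map_mul, hX, map_mul, map_mul, hf]

lemma Phi1_adj_eq (m : ℕ) :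
    Phi1 qAdj m = (Phi1 pGen m).map (alf : R → R) := by
  refine Matrix.ext fun r c => ?_
  have hb : MvPolynomial.map (alf : R →+* R) (bb1 m c) = bb1 m c := by
    rw [bb1, map_monomial, map_one]
  rw [Matrix.map_apply, Phi1, Phi1]
  conv_lhs => rw [← hb]
  rw [← map_subst, coeff_map]
  rfl

lemma Phi2_adj_eq (m : ℕ) :
    Phi2 qAdj m = (Phi2 pGen m).map (alf : R → R) := by
  refine Matrix.ext fun r c => ?_
  have hb : MvPolynomial.map (alf : R →+* R) (bb2 m c) = bb2 m c := by
    rw [bb2, map_monomial, map_one]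
  rw [Matrix.map_apply, Phi2, Phi2]
  conv_lhs => rw [← hb]
  rw [← map_subst, coeff_map]
  rfl

lemma det_Phi1_adj (m : ℕ) : (Phi1 qAdj m).det = alf ((Phi1 pGen m).det) := by
  rw [Phi1_adj_eq]
  have h := (alf : R →+* R).map_det (Phi1 pGen m)
  rw [RingHom.mapMatrix_apply] at h
  exact h.symm

lemma det_Phi2_adj (m : ℕ) : (Phi2 qAdj m).det = alf ((Phi2 pGen m).det) := by
  rw [Phi2_adj_eq]
  have h := (alf : R →+* R).map_det (Phi2 pGen m)
  rw [RingHom.mapMatrix_apply] at h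
  exact h.symm

/-! ## `Dpoly` is prime -/

def e4 : (Fin 2 × Fin 2) ≃ Option (Fin 3) where
  toFun v := ![![some 0, some 1], ![some 2, none]] v.1 v.2
  invFun o := o.elim (1, 1) ![(0, 0), (0, 1), (1, 0)]
  left_inv := by decide
  right_inv := by decide

def isoRA : R ≃ₐ[ℂ] Polynomial (MvPolynomial (Fin 3) ℂ) :=
  (renameEquiv ℂ e4).trans (optionEquivLeft ℂ (Fin 3))

lemma isoRA_D : isoRA Dpoly = Polynomial.C (X 0) * Polynomial.X -
    Polynomial.C (X 1) * Polynomial.C (X 2) := by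
  have h : ∀ v : Fin 2 × Fin 2, isoRA (X v) =
      (optionEquivLeft ℂ (Fin 3)) (X (e4 v)) := by
    intro v
    rw [isoRA, AlgEquiv.trans_apply, renameEquiv_apply, rename_X]
  rw [Dpoly, map_sub, map_mul, map_mul, h, h, h, h]
  have e00 : e4 ((0 : Fin 2), (0 : Fin 2)) = some 0 := rfl
  have e11 : e4 ((1 : Fin 2), (1 : Fin 2)) = none := rfl
  have e01 : e4 ((0 : Fin 2), (1 : Fin 2)) = some 1 := rfl
  have e10 : e4 ((1 : Fin 2), (0 : Fin 2)) = some 2 := rfl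
  rw [e00, e11, e01, e10, optionEquivLeft_X_some, optionEquivLeft_X_none,
    optionEquivLeft_X_some, optionEquivLeft_X_some]

lemma prime_X0 : Prime (X (0 : Fin 3) : MvPolynomial (Fin 3) ℂ) := by
  rw [← MulEquiv.prime_iff (MvPolynomial.finSuccEquiv ℂ 2).toMulEquiv]
  have : (MvPolynomial.finSuccEquiv ℂ 2).toMulEquiv (X 0) = Polynomial.X := by
    show (MvPolynomial.finSuccEquiv ℂ 2) (X 0) = Polynomial.X
    exact MvPolynomial.finSuccEquiv_X_zero
  rw [this]
  exact Polynomial.prime_X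

lemma X0_not_dvd (i : Fin 3) (hi : i ≠ 0) : ¬ (X (0 : Fin 3) : MvPolynomial (Fin 3) ℂ) ∣ X i := by
  intro ⟨t, ht⟩
  have := congrArg (eval (fun j : Fin 3 => if j = i then (1 : ℂ) else 0)) ht
  rw [eval_X, eval_mul, eval_X, if_pos rfl, if_neg (Ne.symm hi), zero_mul] at this
  exact one_ne_zero this

lemma prime_qq : Prime (Polynomial.C (X 0 : MvPolynomial (Fin 3) ℂ) * Polynomial.X -
    Polynomial.C (X 1) * Polynomial.C (X 2)) := by
  set A := MvPolynomial (Fin 3) ℂ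
  set qq : Polynomial A := Polynomial.C (X 0) * Polynomial.X - Polynomial.C (X 1) * Polynomial.C (X 2)
    with hqq
  have hqform : qq = Polynomial.C (X 0) * Polynomial.X + Polynomial.C (-(X 1 * X 2)) := by
    rw [hqq, map_neg, ← map_mul]; ring
  have hdeg : qq.degree = 1 := by
    rw [hqform]
    exact Polynomial.degree_linear (MvPolynomial.X_ne_zero 0)
  have hq0 : qq ≠ 0 := fun h => by rw [h, Polynomial.degree_zero] at hdeg; exact absurd hdeg (by simp)
  have hcoeff1 : qq.coeff 1 = X 0 := by
    rw [hqform, Polynomial.coeff_add, Polynomial.coeff_C_mul, Polynomial.coeff_X_one,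
      Polynomial.coeff_C, if_neg one_ne_zero, mul_one, add_zero]
  have hcoeff0 : qq.coeff 0 = -(X 1 * X 2) := by
    rw [hqform, Polynomial.coeff_add, Polynomial.coeff_C_mul, Polynomial.coeff_X_zero,
      Polynomial.coeff_C, if_pos rfl, mul_zero, zero_add]
  have hXyz : ¬ (X (0 : Fin 3) : A) ∣ X 1 * X 2 := by
    intro hdvd
    rcases prime_X0.2.2 _ _ hdvd with h | h
    · exact X0_not_dvd 1 (by decide) h
    · exact X0_not_dvd 2 (by decide) h
  -- a key step : any constant dividing qq is a unit
  have hconst : ∀ a : A, (∀ n, a ∣ qq.coeff n) → IsUnit a := by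
    intro a ha
    have h1 : a ∣ X 0 := hcoeff1 ▸ ha 1
    have h0 : a ∣ X 1 * X 2 := by
      have h2 := ha 0
      rw [hcoeff0] at h2
      exact dvd_neg.mp h2
    obtain ⟨t, ht⟩ := h1
    rcases prime_X0.irreducible.isUnit_or_isUnit ht with h | h
    · exact h
    · exfalso
      obtain ⟨ti, hti⟩ := h.exists_right_inv
      have hX0a : (X (0 : Fin 3) : A) ∣ a := ⟨ti, by rw [← mul_one a, ← hti, ← mul_assoc, ← ht]⟩
      exact hXyz (hX0a.trans h0)
  have hirr : Irreducible qq := by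
    constructor
    · intro hu
      rw [Polynomial.degree_eq_zero_of_isUnit hu] at hdeg
      exact absurd hdeg (by simp)
    · intro f g hfg
      have hf0 : f ≠ 0 := fun h => hq0 (by rw [hfg, h, zero_mul])
      have hg0 : g ≠ 0 := fun h => hq0 (by rw [hfg, h, mul_zero])
      have hsum : f.natDegree + g.natDegree = 1 := by
        have hd : f.degree + g.degree = 1 := by rw [← Polynomial.degree_mul, ← hfg, hdeg]
        rw [Polynomial.degree_eq_natDegree hf0, Polynomial.degree_eq_natDegree hg0] at hd
        exact_mod_cast hd
      rcases Nat.eq_zero_or_pos f.natDegree with hf | hf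
      · left
        obtain ⟨a, rfl⟩ := Polynomial.natDegree_eq_zero.mp hf
        rw [Polynomial.isUnit_C]
        refine hconst a fun n => ?_
        rw [hfg, Polynomial.coeff_C_mul]
        exact Dvd.intro _ rfl
      · right
        have hg : g.natDegree = 0 := by omega
        obtain ⟨a, rfl⟩ := Polynomial.natDegree_eq_zero.mp hg
        rw [Polynomial.isUnit_C]
        refine hconst a fun n => ?_
        rw [hfg, Polynomial.coeff_mul_C]
        exact Dvd.intro _ (mul_comm _ _)
  exact UniqueFactorizationMonoid.irreducible_iff_prime.mp hirr

lemma prime_D : Prime Dpoly := by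
  rw [← MulEquiv.prime_iff isoRA.toMulEquiv]
  have : isoRA.toMulEquiv Dpoly = Polynomial.C (X 0) * Polynomial.X -
      Polynomial.C (X 1) * Polynomial.C (X 2) := isoRA_D
  rw [this]
  exact prime_qq

/-! ## Pinning the exponent of `Dpoly` in determinants -/

lemma pin (m t : ℕ) (M : Matrix (Fin (m + 2) × Fin (m + 1)) (Fin (m + 2) × Fin (m + 1)) R)
    (hMt : alf M.det * M.det = Dpoly ^ t) :
    ∃ i, 2 * i = t ∧ ∃ u : Rˣ, M.det * ↑u = Dpoly ^ i := by
  have hDp : Prime Dpoly := prime_D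
  have hD0 : Dpoly ≠ 0 := hDp.ne_zero
  have hdvd : M.det ∣ Dpoly ^ t := ⟨alf M.det, by rw [← hMt]; ring⟩
  obtain ⟨i, hit, hassoc⟩ := (dvd_prime_pow hDp t).mp hdvd
  obtain ⟨u, hu⟩ := hassoc
  refine ⟨i, ?_, u, hu⟩
  have half : alf M.det * alf (u : R) = Dpoly ^ i := by
    have h := congrArg alf hu
    rw [map_mul, map_pow, alf_D] at h
    exact h
  have hw : Dpoly ^ t * (alf (u : R) * (u : R)) = Dpoly ^ (2 * i) := by
    calc Dpoly ^ t * (alf (u : R) * (u : R))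
        = (alf M.det * alf (u : R)) * (M.det * (u : R)) := by rw [← hMt]; ring
      _ = Dpoly ^ i * Dpoly ^ i := by rw [half, hu]
      _ = Dpoly ^ (2 * i) := by rw [← pow_add]; ring_nf
  have hwu : IsUnit (alf (u : R) * (u : R)) := (u.isUnit.map alf).mul u.isUnit
  rcases lt_trichotomy t (2 * i) with hlt | heq | hgt
  · exfalso
    have hweq : alf (u : R) * (u : R) = Dpoly ^ (2 * i - t) := by
      apply mul_left_cancel₀ (pow_ne_zero t hD0)
      rw [hw, ← pow_add, show t + (2 * i - t) = 2 * i by omega]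
    rw [hweq] at hwu
    exact hDp.not_unit ((isUnit_pow_iff (by omega : 2 * i - t ≠ 0)).mp hwu)
  · exact heq.symm
  · exfalso
    have hone : Dpoly ^ (t - 2 * i) * (alf (u : R) * (u : R)) = 1 := by
      apply mul_left_cancel₀ (pow_ne_zero (2 * i) hD0)
      rw [mul_one, ← mul_assoc, ← pow_add, show 2 * i + (t - 2 * i) = t by omega, hw]
    have h1 := IsUnit.of_mul_eq_one _ hone
    exact hDp.not_unit ((isUnit_pow_iff (by omega : t - 2 * i ≠ 0)).mp h1)

end

end Lem34


theorem dvd_adjugate_matP (m : ℕ) (hm : 1 ≤ m) :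
    ∀ r c, Dpoly ^ (m * (m + 1) / 2) ∣ (matP m).adjugate r c := by
  classical
  intro r c
  have hDp : Prime Dpoly := Lem34.prime_D
  have hD0 : Dpoly ≠ 0 := hDp.ne_zero
  set k : ℕ := m * (m + 1) / 2 with hkdef
  have h2k : 2 * k = m * (m + 1) := by
    obtain ⟨t, ht⟩ := Nat.even_mul_succ_self m
    omega
  have hcard : Fintype.card (Fin (m + 2) × Fin (m + 1)) = (m + 2) * (m + 1) := by simp
  set P : ℕ := (m + 2) * (m + 1) with hPdef
  -- determinant products
  have hdet1 : Lem34.alf ((Lem34.Phi1 pGen m).det) * (Lem34.Phi1 pGen m).det = Dpoly ^ (m * P) := by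
    rw [← Lem34.det_Phi1_adj, ← Matrix.det_mul, Lem34.MI3, Matrix.det_smul, Matrix.det_one, mul_one,
      ← pow_mul, hcard]
  have hdet2 : Lem34.alf ((Lem34.Phi2 pGen m).det) * (Lem34.Phi2 pGen m).det = Dpoly ^ ((m + 1) * P) := by
    rw [← Lem34.det_Phi2_adj, ← Matrix.det_mul, Lem34.MI2, Matrix.det_smul, Matrix.det_one, mul_one,
      ← pow_mul, hcard]
  obtain ⟨i1, hi1, u1, hu1⟩ := Lem34.pin m (m * P) (Lem34.Phi1 pGen m) hdet1
  obtain ⟨i2, hi2, u2, hu2⟩ := Lem34.pin m ((m + 1) * P) (Lem34.Phi2 pGen m) hdet2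
  have hi21 : i2 = i1 + (m + 1 + k) := by
    have hstep : (m + 1) * P = m * P + P := by ring
    have hP2 : P = 2 * (m + 1) + m * (m + 1) := by rw [hPdef]; ring
    omega
  -- main determinant identity
  have hEdetC : (Lem34.EcR m).det = C ((Lem34.Ec m).det) := by
    have h2 := (C : ℂ →+* R).map_det (Lem34.Ec m)
    rw [RingHom.mapMatrix_apply] at h2
    exact h2.symm
  have hdetMI : (matP m).det * (Lem34.Phi1 pGen m).det = (Lem34.Phi2 pGen m).det * C ((Lem34.Ec m).det) := by
    have h := congrArg Matrix.det (Lem34.MI1 m)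
    rw [Matrix.det_mul, Matrix.det_mul, hEdetC] at h
    exact h
  set e0 : ℂ := (Lem34.Ec m).det with he0def
  have he0 : e0 ≠ 0 := Lem34.detEc_ne m
  have hCe0 : (C e0 : R) ≠ 0 := fun h => he0 (by
    have := congrArg (coeff 0) h
    rwa [coeff_C, if_pos rfl, coeff_zero] at this)
  have hkey : (matP m).det * (u2 : _root_.R) = Dpoly ^ (m + 1 + k) * C e0 * (u1 : _root_.R) := by
    have h1 : Dpoly ^ i1 * ((matP m).det * (u2 : _root_.R)) =
        Dpoly ^ i1 * (Dpoly ^ (m + 1 + k) * C e0 * (u1 : _root_.R)) := by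
      calc Dpoly ^ i1 * ((matP m).det * (u2 : _root_.R))
          = ((matP m).det * (Lem34.Phi1 pGen m).det) * (u1 : _root_.R) * (u2 : _root_.R) := by rw [← hu1]; ring
        _ = ((Lem34.Phi2 pGen m).det * (u2 : _root_.R)) * C e0 * (u1 : _root_.R) := by rw [hdetMI]; ring
        _ = Dpoly ^ i2 * C e0 * (u1 : _root_.R) := by rw [hu2]
        _ = Dpoly ^ i1 * (Dpoly ^ (m + 1 + k) * C e0 * (u1 : _root_.R)) := by rw [hi21, pow_add]; ring
    exact mul_left_cancel₀ (pow_ne_zero _ hD0) h1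
  have hdetM : (matP m).det ≠ 0 := by
    intro h0
    rw [h0, zero_mul] at hkey
    exact (mul_ne_zero (mul_ne_zero (pow_ne_zero _ hD0) hCe0) u1.ne_zero) hkey.symm
  have hdetPhi1 : (Lem34.Phi1 pGen m).det ≠ 0 := by
    intro h0
    rw [h0, zero_mul] at hu1
    exact pow_ne_zero _ hD0 hu1.symm
  set G := matP m * Lem34.Phi1 pGen m with hGdef
  have hdetG : G.det ≠ 0 := by
    rw [hGdef, Matrix.det_mul]
    exact mul_ne_zero hdetM hdetPhi1
  set Y := Lem34.Phi1 pGen m * (Lem34.EcR m).adjugate * Lem34.Phi2 Lem34.qAdj m with hYdef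
  have hA : (matP m).adjugate * G = (matP m).det • Lem34.Phi1 pGen m := by
    rw [hGdef, ← Matrix.mul_assoc, Matrix.adjugate_mul, Matrix.smul_mul, Matrix.one_mul]
  have hB : Y * G = (Dpoly ^ (m + 1) * C e0) • Lem34.Phi1 pGen m := by
    rw [hYdef, hGdef, Lem34.MI1 m]
    have hstep : Lem34.Phi2 Lem34.qAdj m * (Lem34.Phi2 pGen m * Lem34.EcR m) = Dpoly ^ (m + 1) • Lem34.EcR m := by
      rw [← Matrix.mul_assoc, Lem34.MI2, Matrix.smul_mul, Matrix.one_mul]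
    rw [Matrix.mul_assoc (Lem34.Phi1 pGen m * (Lem34.EcR m).adjugate) _ _, hstep, Matrix.mul_smul,
      Matrix.mul_assoc (Lem34.Phi1 pGen m) _ _, Matrix.adjugate_mul, Matrix.mul_smul,
      Matrix.mul_one, smul_smul, hEdetC]
  have hZ : ((C e0 * (u2 : _root_.R)) • (matP m).adjugate - (((u1 : _root_.R) : R) * C e0 * Dpoly ^ k) • Y) * G = 0 := by
    rw [Matrix.sub_mul, Matrix.smul_mul, Matrix.smul_mul, hA, hB, smul_smul, smul_smul,
      sub_eq_zero]
    refine congrArg (fun z : _root_.R => z • Lem34.Phi1 pGen m) ?_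
    calc C e0 * (u2 : _root_.R) * (matP m).det = C e0 * ((matP m).det * (u2 : _root_.R)) := by ring
      _ = C e0 * (Dpoly ^ (m + 1 + k) * C e0 * (u1 : _root_.R)) := by rw [hkey]
      _ = (u1 : _root_.R) * C e0 * Dpoly ^ k * (Dpoly ^ (m + 1) * C e0) := by rw [pow_add]; ring
  have hZ0 : (C e0 * (u2 : _root_.R)) • (matP m).adjugate - (((u1 : _root_.R) : R) * C e0 * Dpoly ^ k) • Y = 0 := by
    have h1 := congrArg (fun M => M * G.adjugate) hZ
    simp only [Matrix.zero_mul] at h1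
    rw [Matrix.mul_assoc, Matrix.mul_adjugate, Matrix.mul_smul, Matrix.mul_one] at h1
    refine Matrix.ext fun a b => ?_
    have h2 := congrFun (congrFun h1 a) b
    rw [Matrix.smul_apply, smul_eq_mul] at h2
    have h3 : G.det * (((C e0 * (u2 : _root_.R)) • (matP m).adjugate -
        (((u1 : _root_.R) : R) * C e0 * Dpoly ^ k) • Y) a b) = 0 := h2
    rw [Matrix.zero_apply]
    exact (mul_eq_zero.mp h3).resolve_left hdetG
  have hentry : (C e0 * (u2 : _root_.R)) * (matP m).adjugate r c =
      (((u1 : _root_.R) : R) * C e0 * Dpoly ^ k) * Y r c := by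
    have h2 := congrFun (congrFun hZ0 r) c
    rw [Matrix.sub_apply, Matrix.smul_apply, Matrix.smul_apply, Matrix.zero_apply,
      sub_eq_zero, smul_eq_mul, smul_eq_mul] at h2
    exact h2
  have hdvd : Dpoly ^ k ∣ (C e0 * (u2 : _root_.R)) * (matP m).adjugate r c :=
    ⟨(((u1 : _root_.R) : R) * C e0) * Y r c, by rw [hentry]; ring⟩
  have hunit : IsUnit ((C e0 : R) * (u2 : _root_.R)) :=
    ((isUnit_iff_ne_zero.mpr he0).map (C : ℂ →+* R)).mul u2.isUnit
  exact (IsUnit.dvd_mul_left hunit).mp hdvd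
end
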